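/- arXiv:1610.01400 — 8 statements merged into one kernel-verified Lean document; each statement's English description precedes it below -/
import Mathlib

section
/- For any P in the transport polytope 𝒫(a,b) with cost C_{ij} = 2(1 - δ_{ij}) minimizing ⟨P,C⟩, the diagonal entries satisfy P_{ii} = min(a_i, b_i) for all i. -/
open scoped BigOperators

/-- Any minimizer `P` of the transport cost with
`C i j = 2 (1 - δ_{ij})` satisfies `P i i = min (a i) (b i)`. -/
theorem stmt_1 (M : ℕ) (a b : Fin M → ℝ)
    (ha : ∀ i, 0 ≤ a i) (hb : ∀ i, 0 ≤ b i)
    (hmass : ∑ i, a i = ∑ i, b i)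
    (P : Matrix (Fin M) (Fin M) ℝ)
    (hP : ∀ i j, 0 ≤ P i j)
    (hProw : ∀ i, ∑ j, P i j = a i)
    (hPcol : ∀ j, ∑ i, P i j = b j)
    (hmin : ∀ Q : Matrix (Fin M) (Fin M) ℝ,
      (∀ i j, 0 ≤ Q i j) → (∀ i, ∑ j, Q i j = a i) → (∀ j, ∑ i, Q i j = b j) →
      ∑ i, ∑ j, P i j * (if i = j then (0 : ℝ) else 2) ≤
        ∑ i, ∑ j, Q i j * (if i = j then (0 : ℝ) else 2)) :
    ∀ i, P i i = min (a i) (b i) := by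
  classical
  set m : Fin M → ℝ := fun i => min (a i) (b i) with hm
  have hma : ∀ i, m i ≤ a i := fun i => min_le_left _ _
  have hmb : ∀ i, m i ≤ b i := fun i => min_le_right _ _
  have hm0 : ∀ i, 0 ≤ m i := fun i => le_min (ha i) (hb i)
  have hPle : ∀ i, P i i ≤ m i := by
    intro i
    refine le_min ?_ ?_
    · rw [← hProw i]
      exact Finset.single_le_sum (fun j _ => hP i j) (Finset.mem_univ i)
    · rw [← hPcol i]
      exact Finset.single_le_sum (fun j _ => hP j i) (Finset.mem_univ i)
  set S : ℝ := ∑ i, (a i - m i) with hS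
  have hSb : ∑ i, (b i - m i) = S := by
    rw [hS, Finset.sum_sub_distrib, Finset.sum_sub_distrib, hmass]
  have hS0 : 0 ≤ S := Finset.sum_nonneg fun i _ => sub_nonneg.2 (hma i)
  have haS : S = 0 → ∀ i, a i - m i = 0 := by
    intro h i
    exact (Finset.sum_eq_zero_iff_of_nonneg
      (fun j _ => sub_nonneg.2 (hma j))).1 (hS ▸ h) i (Finset.mem_univ i)
  have hbS : S = 0 → ∀ i, b i - m i = 0 := by
    intro h i
    exact (Finset.sum_eq_zero_iff_of_nonneg
      (fun j _ => sub_nonneg.2 (hmb j))).1 (hSb.trans h) i (Finset.mem_univ i)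
  set Q : Matrix (Fin M) (Fin M) ℝ :=
    fun i j => (if i = j then m i else 0) + (a i - m i) * (b j - m j) / S with hQ
  have hQ0 : ∀ i j, 0 ≤ Q i j := by
    intro i j
    apply add_nonneg
    · split <;> simp [hm0 i]
    · exact div_nonneg (mul_nonneg (sub_nonneg.2 (hma i)) (sub_nonneg.2 (hmb j))) hS0
  have hQrow : ∀ i, ∑ j, Q i j = a i := by
    intro i
    rw [hQ]
    simp only
    rw [Finset.sum_add_distrib, Finset.sum_ite_eq Finset.univ i (fun _ => m i)]
    have h1 : ∑ j, (a i - m i) * (b j - m j) / S = (a i - m i) * S / S := by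
      rw [← Finset.sum_div, ← Finset.mul_sum, hSb]
    rw [h1]
    rcases eq_or_ne S 0 with h | h
    · have h2 := haS h i
      rw [h2]
      simp
      linarith
    · rw [mul_div_assoc, div_self h, mul_one]
      simp
  have hQcol : ∀ j, ∑ i, Q i j = b j := by
    intro j
    rw [hQ]
    simp only
    have heq : ∀ i, (if i = j then m i else 0) = (if j = i then m j else 0) := by
      intro i
      by_cases h : i = j
      · simp [h]
      · rw [if_neg h, if_neg (fun h' => h h'.symm)]
    rw [Finset.sum_add_distrib]
    rw [Finset.sum_congr rfl (fun i _ => by rw [heq i])]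
    rw [Finset.sum_ite_eq Finset.univ j (fun _ => m j)]
    have h1 : ∑ i, (a i - m i) * (b j - m j) / S = S * (b j - m j) / S := by
      rw [← Finset.sum_div]
      congr 1
      rw [← Finset.sum_mul]
    rw [h1]
    rcases eq_or_ne S 0 with h | h
    · have h2 := hbS h j
      rw [h2]
      simp
      linarith
    · rw [mul_comm, mul_div_assoc, div_self h, mul_one]
      simp
  -- cost formula
  have hcost : ∀ R : Matrix (Fin M) (Fin M) ℝ,
      ∑ i, ∑ j, R i j * (if i = j then (0 : ℝ) else 2)
        = 2 * (∑ i, ∑ j, R i j) - 2 * ∑ i, R i i := by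
    intro R
    have h1 : ∀ i, ∑ j, R i j * (if i = j then (0 : ℝ) else 2)
        = 2 * (∑ j, R i j) - 2 * R i i := by
      intro i
      have h2 : ∑ j, R i j * (if i = j then (0 : ℝ) else 2)
          = ∑ j, (2 * R i j - (if i = j then 2 * R i j else 0)) := by
        apply Finset.sum_congr rfl
        intro j _
        by_cases h : i = j <;> simp [h] <;> ring
      rw [h2, Finset.sum_sub_distrib, ← Finset.mul_sum,
        Finset.sum_ite_eq Finset.univ i (fun j => 2 * R i j)]
      simp
    rw [Finset.sum_congr rfl (fun i _ => h1 i), Finset.sum_sub_distrib,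
      ← Finset.mul_sum, ← Finset.mul_sum]
  have hkey := hmin Q hQ0 hQrow hQcol
  rw [hcost P, hcost Q] at hkey
  have hsums : (∑ i, ∑ j, P i j) = ∑ i, ∑ j, Q i j := by
    rw [Finset.sum_congr rfl (fun i _ => hProw i),
      Finset.sum_congr rfl (fun i _ => hQrow i)]
  rw [hsums] at hkey
  have hQP : ∑ i, Q i i ≤ ∑ i, P i i := by linarith
  have hQm : ∀ i, m i ≤ Q i i := by
    intro i
    have hQii : Q i i = m i + (a i - m i) * (b i - m i) / S := by
      rw [hQ]; simp
    rw [hQii]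
    have : 0 ≤ (a i - m i) * (b i - m i) / S :=
      div_nonneg (mul_nonneg (sub_nonneg.2 (hma i)) (sub_nonneg.2 (hmb i))) hS0
    linarith
  have hmP : ∑ i, m i ≤ ∑ i, P i i :=
    le_trans (Finset.sum_le_sum fun i _ => hQm i) hQP
  have hPm : ∑ i, P i i ≤ ∑ i, m i := Finset.sum_le_sum fun i _ => hPle i
  have hzero : ∑ i, (m i - P i i) = 0 := by
    rw [Finset.sum_sub_distrib]
    linarith
  intro i
  have := (Finset.sum_eq_zero_iff_of_nonneg
    (fun j _ => sub_nonneg.2 (hPle j))).1 hzero i (Finset.mem_univ i)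
  have : P i i = m i := by linarith
  rw [this]
end

section
/- The function MK(α) equals sup over β with Lβ ≤ c of ⟨α, β⟩ (linear programming duality for the optimal transport linear program). -/
open scoped BigOperators
open Filter Topology

section OTaux

variable {M : ℕ}

/-- The cone of (row marginals, column marginals, cost upper bounds). -/
def OTcone (C : Matrix (Fin M) (Fin M) ℝ) : Set ((Fin M → ℝ) × (Fin M → ℝ) × ℝ) :=
  { q | ∃ P : Matrix (Fin M) (Fin M) ℝ,
      (∀ i j, 0 ≤ P i j) ∧ (∀ i, ∑ j, P i j = q.1 i) ∧
      (∀ j, ∑ i, P i j = q.2.1 j) ∧ ∑ i, ∑ j, P i j * C i j ≤ q.2.2 }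

theorem OTcone_convex (C : Matrix (Fin M) (Fin M) ℝ) : Convex ℝ (OTcone C) := by
  rintro v ⟨P, hP0, hP1, hP2, hP3⟩ w ⟨Q, hQ0, hQ1, hQ2, hQ3⟩ s t hs ht hst
  refine ⟨fun i j => s * P i j + t * Q i j,
    fun i j => add_nonneg (mul_nonneg hs (hP0 i j)) (mul_nonneg ht (hQ0 i j)), ?_, ?_, ?_⟩
  · intro i
    simp only [Finset.sum_add_distrib, ← Finset.mul_sum, hP1, hQ1,
      Prod.fst_add, Prod.smul_fst, Pi.add_apply, Pi.smul_apply, smul_eq_mul]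
  · intro j
    simp only [Finset.sum_add_distrib, ← Finset.mul_sum, hP2, hQ2,
      Prod.snd_add, Prod.smul_snd, Prod.fst_add, Prod.smul_fst, Pi.add_apply,
      Pi.smul_apply, smul_eq_mul]
  · have h : ∑ i, ∑ j, (s * P i j + t * Q i j) * C i j
        = s * (∑ i, ∑ j, P i j * C i j) + t * (∑ i, ∑ j, Q i j * C i j) := by
      simp only [Finset.mul_sum, Finset.sum_add_distrib, add_mul, mul_assoc]
    rw [h]
    have h1 : s * (∑ i, ∑ j, P i j * C i j) ≤ s * v.2.2 := mul_le_mul_of_nonneg_left hP3 hs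
    have h2 : t * (∑ i, ∑ j, Q i j * C i j) ≤ t * w.2.2 := mul_le_mul_of_nonneg_left hQ3 ht
    have h3 : (s • v + t • w).2.2 = s * v.2.2 + t * w.2.2 := by simp
    rw [h3]; exact add_le_add h1 h2

theorem OTcone_smul (C : Matrix (Fin M) (Fin M) ℝ) {c : ℝ} (hc : 0 ≤ c)
    {v : (Fin M → ℝ) × (Fin M → ℝ) × ℝ} (hv : v ∈ OTcone C) : c • v ∈ OTcone C := by
  obtain ⟨P, hP0, hP1, hP2, hP3⟩ := hv
  refine ⟨fun i j => c * P i j, fun i j => mul_nonneg hc (hP0 i j), ?_, ?_, ?_⟩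
  · intro i; simp [← Finset.mul_sum, hP1]
  · intro j; simp [← Finset.mul_sum, hP2]
  · have h : ∑ i, ∑ j, (c * P i j) * C i j = c * ∑ i, ∑ j, P i j * C i j := by
      simp [Finset.mul_sum, mul_assoc]
    rw [h]
    have h2 : (c • v).2.2 = c * v.2.2 := by simp
    rw [h2]; exact mul_le_mul_of_nonneg_left hP3 hc

theorem OTcone_isClosed (C : Matrix (Fin M) (Fin M) ℝ) : IsClosed (OTcone C) := by
  refine IsSeqClosed.isClosed ?_
  intro q q₀ hq hlim
  choose P hP0 hP1 hP2 hP3 using hq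
  set Pf : ℕ → (Fin M → Fin M → ℝ) := fun n i j => P n i j with hPf
  have hev1 : ∀ i : Fin M, Tendsto (fun n => (q n).1 i) atTop (𝓝 (q₀.1 i)) := fun i =>
    (((continuous_apply i).comp continuous_fst).tendsto q₀).comp hlim
  have hev2 : ∀ j : Fin M, Tendsto (fun n => (q n).2.1 j) atTop (𝓝 (q₀.2.1 j)) := fun j =>
    (((continuous_apply j).comp (continuous_fst.comp continuous_snd)).tendsto q₀).comp hlim
  have hev3 : Tendsto (fun n => (q n).2.2) atTop (𝓝 q₀.2.2) :=
    ((continuous_snd.comp continuous_snd).tendsto q₀).comp hlim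
  have hs : Tendsto (fun n => ∑ i, (q n).1 i) atTop (𝓝 (∑ i, q₀.1 i)) :=
    tendsto_finset_sum _ fun i _ => hev1 i
  obtain ⟨R, hR⟩ := hs.bddAbove_range
  have hRmem : ∀ n, ∑ i, (q n).1 i ≤ R := fun n => hR (Set.mem_range_self n)
  have hbound : ∀ n, Pf n ∈ Set.Icc (0 : Fin M → Fin M → ℝ) (fun _ _ => R) := by
    intro n
    rw [Set.mem_Icc]
    refine ⟨fun i j => hP0 n i j, fun i j => ?_⟩
    calc P n i j ≤ ∑ j', P n i j' :=
          Finset.single_le_sum (fun j' _ => hP0 n i j') (Finset.mem_univ j)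
      _ = (q n).1 i := hP1 n i
      _ ≤ ∑ i', (q n).1 i' := by
          refine Finset.single_le_sum (fun i' _ => ?_) (Finset.mem_univ i)
          rw [← hP1 n i']
          exact Finset.sum_nonneg fun j' _ => hP0 n i' j'
      _ ≤ R := hRmem n
  obtain ⟨P₀, hP₀mem, φ, hφ, hPlim⟩ := isCompact_Icc.tendsto_subseq hbound
  have hentry : ∀ i j, Tendsto (fun n => P (φ n) i j) atTop (𝓝 (P₀ i j)) := by
    intro i j
    have h : Continuous fun p : Fin M → Fin M → ℝ => p i j :=
      (continuous_apply j).comp (continuous_apply i)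
    exact (h.tendsto P₀).comp hPlim
  refine ⟨P₀, fun i j => hP₀mem.1 i j, ?_, ?_, ?_⟩
  · intro i
    refine tendsto_nhds_unique (tendsto_finset_sum _ fun j _ => hentry i j) ?_
    have h1 : (fun n => ∑ j, P (φ n) i j) = fun n => (q (φ n)).1 i := by
      funext n; exact hP1 (φ n) i
    rw [h1]
    exact (hev1 i).comp hφ.tendsto_atTop
  · intro j
    refine tendsto_nhds_unique (tendsto_finset_sum _ fun i _ => hentry i j) ?_
    have h1 : (fun n => ∑ i, P (φ n) i j) = fun n => (q (φ n)).2.1 j := by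
      funext n; exact hP2 (φ n) j
    rw [h1]
    exact (hev2 j).comp hφ.tendsto_atTop
  · refine le_of_tendsto_of_tendsto'
      (tendsto_finset_sum _ fun i _ => tendsto_finset_sum _ fun j _ => (hentry i j).mul_const _)
      (hev3.comp hφ.tendsto_atTop) (fun n => hP3 (φ n))

end OTaux


section OTaux2

variable {M : ℕ}

private lemma fst_sum' {ι : Type*} (s : Finset ι) {α β : Type*} [AddCommMonoid α]
    [AddCommMonoid β] (f : ι → α × β) : (∑ i ∈ s, f i).1 = ∑ i ∈ s, (f i).1 :=
  map_sum (AddMonoidHom.fst α β) f s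

private lemma snd_sum' {ι : Type*} (s : Finset ι) {α β : Type*} [AddCommMonoid α]
    [AddCommMonoid β] (f : ι → α × β) : (∑ i ∈ s, f i).2 = ∑ i ∈ s, (f i).2 :=
  map_sum (AddMonoidHom.snd α β) f s

theorem OT_decomp (f : ((Fin M → ℝ) × (Fin M → ℝ) × ℝ) →L[ℝ] ℝ) (x y : Fin M → ℝ) (z : ℝ) :
    f (x, y, z) = (∑ i, x i * f (Pi.single i 1, 0, 0)) + (∑ j, y j * f (0, Pi.single j 1, 0))
      + z * f (0, 0, 1) := by
  have hx : (x, y, z) = (∑ i, x i • ((Pi.single i 1 : Fin M → ℝ), (0 : Fin M → ℝ), (0:ℝ)))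
      + (∑ j, y j • ((0 : Fin M → ℝ), (Pi.single j 1 : Fin M → ℝ), (0:ℝ)))
      + z • ((0 : Fin M → ℝ), (0 : Fin M → ℝ), (1:ℝ)) := by
    refine Prod.ext ?_ (Prod.ext ?_ ?_)
    · simp only [Prod.fst_add, fst_sum', Prod.smul_fst, smul_zero, Finset.sum_const_zero,
        add_zero, zero_add]
      funext k
      simp [Finset.sum_apply, Pi.single_apply, Finset.sum_ite_eq]
    · simp only [Prod.snd_add, Prod.fst_add, snd_sum', fst_sum', Prod.smul_snd, Prod.smul_fst,
        smul_zero, Finset.sum_const_zero, add_zero, zero_add]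
      funext k
      simp [Finset.sum_apply, Pi.single_apply, Finset.sum_ite_eq]
    · simp [Prod.snd_add, snd_sum', Prod.smul_snd]
  rw [hx]
  simp only [map_add, map_sum, map_smul, smul_eq_mul]

theorem OT_margsum (P : Matrix (Fin M) (Fin M) ℝ) (a b β1 β2 : Fin M → ℝ)
    (h1 : ∀ i, ∑ j, P i j = a i) (h2 : ∀ j, ∑ i, P i j = b j) :
    (∑ i, a i * β1 i) + (∑ j, b j * β2 j) = ∑ i, ∑ j, P i j * (β1 i + β2 j) := by
  have e1 : ∑ i, a i * β1 i = ∑ i, ∑ j, P i j * β1 i := by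
    refine Finset.sum_congr rfl fun i _ => ?_
    rw [← h1 i, Finset.sum_mul]
  have e2 : ∑ j, b j * β2 j = ∑ i, ∑ j, P i j * β2 j := by
    rw [Finset.sum_comm]
    refine Finset.sum_congr rfl fun j _ => ?_
    rw [← h2 j, Finset.sum_mul]
  rw [e1, e2, ← Finset.sum_add_distrib]
  refine Finset.sum_congr rfl fun i _ => ?_
  rw [← Finset.sum_add_distrib]
  exact Finset.sum_congr rfl fun j _ => (mul_add _ _ _).symm

end OTaux2

/-- Linear programming duality for the optimal transport
linear program: the minimal transport cost equals the supremum of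
`⟨α, β⟩` over dual variables `β` satisfying `Lβ ≤ c`. -/
theorem stmt_4 (M : ℕ) (C : Matrix (Fin M) (Fin M) ℝ)
    (a b : Fin M → ℝ)
    (ha : ∀ i, 0 ≤ a i) (hb : ∀ i, 0 ≤ b i)
    (hmass : ∑ i, a i = ∑ i, b i) :
    sInf {x : ℝ | ∃ P : Matrix (Fin M) (Fin M) ℝ,
        (∀ i j, 0 ≤ P i j) ∧ (∀ i, ∑ j, P i j = a i) ∧ (∀ j, ∑ i, P i j = b j) ∧
        x = ∑ i, ∑ j, P i j * C i j}
      = sSup {y : ℝ | ∃ β : (Fin M → ℝ) × (Fin M → ℝ),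
        (∀ i j, β.1 i + β.2 j ≤ C i j) ∧
        y = (∑ i, a i * β.1 i) + (∑ j, b j * β.2 j)} := by
  set Sp : Set ℝ := {x : ℝ | ∃ P : Matrix (Fin M) (Fin M) ℝ,
      (∀ i j, 0 ≤ P i j) ∧ (∀ i, ∑ j, P i j = a i) ∧ (∀ j, ∑ i, P i j = b j) ∧
      x = ∑ i, ∑ j, P i j * C i j} with hSp
  set Sd : Set ℝ := {y : ℝ | ∃ β : (Fin M → ℝ) × (Fin M → ℝ),
      (∀ i j, β.1 i + β.2 j ≤ C i j) ∧
      y = (∑ i, a i * β.1 i) + (∑ j, b j * β.2 j)} with hSd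
  -- a feasible primal plan
  obtain ⟨P₀, hP₀0, hP₀1, hP₀2⟩ : ∃ P : Matrix (Fin M) (Fin M) ℝ,
      (∀ i j, 0 ≤ P i j) ∧ (∀ i, ∑ j, P i j = a i) ∧ (∀ j, ∑ i, P i j = b j) := by
    by_cases hS : ∑ i, a i = 0
    · refine ⟨0, fun i j => le_refl 0, fun i => ?_, fun j => ?_⟩
      · simpa using
          ((Finset.sum_eq_zero_iff_of_nonneg (fun i _ => ha i)).mp hS i (Finset.mem_univ i)).symm
      · simpa using ((Finset.sum_eq_zero_iff_of_nonneg (fun j _ => hb j)).mp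
          (hmass.symm.trans hS) j (Finset.mem_univ j)).symm
    · have hS0 : 0 < ∑ i, a i :=
        lt_of_le_of_ne (Finset.sum_nonneg fun i _ => ha i) (Ne.symm hS)
      refine ⟨fun i j => a i * b j / (∑ k, a k),
        fun i j => div_nonneg (mul_nonneg (ha i) (hb j)) hS0.le, fun i => ?_, fun j => ?_⟩
      · rw [← Finset.sum_div, ← Finset.mul_sum, ← hmass, mul_div_assoc, div_self hS, mul_one]
      · rw [← Finset.sum_div, show ∑ i, a i * b j = (∑ i, a i) * b j from
          (Finset.sum_mul ..).symm, mul_comm, mul_div_assoc, div_self hS, mul_one]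
  have hc₀ : (∑ i, ∑ j, P₀ i j * C i j) ∈ Sp := ⟨P₀, hP₀0, hP₀1, hP₀2, rfl⟩
  have hne_p : Sp.Nonempty := ⟨_, hc₀⟩
  -- weak duality
  have weak : ∀ y ∈ Sd, ∀ x ∈ Sp, y ≤ x := by
    rintro y ⟨β, hβ, rfl⟩ x ⟨P, hQ0, hQ1, hQ2, rfl⟩
    rw [OT_margsum P a b β.1 β.2 hQ1 hQ2]
    exact Finset.sum_le_sum fun i _ => Finset.sum_le_sum fun j _ =>
      mul_le_mul_of_nonneg_left (hβ i j) (hQ0 i j)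
  -- a feasible dual point
  have hne_d : Sd.Nonempty := by
    refine ⟨_, ⟨(fun i => if h : (Finset.univ : Finset (Fin M)).Nonempty
        then Finset.univ.inf' h (C i) else 0, 0), fun i j => ?_, rfl⟩⟩
    have hne : (Finset.univ : Finset (Fin M)).Nonempty := ⟨j, Finset.mem_univ j⟩
    simp only [dif_pos hne, Pi.zero_apply, add_zero]
    exact Finset.inf'_le (C i) (Finset.mem_univ j)
  obtain ⟨y₀, hy₀⟩ := hne_d
  have hbddA : BddAbove Sd := ⟨_, fun y hy => weak y hy _ hc₀⟩
  have hbddB : BddBelow Sp := ⟨y₀, fun x hx => weak y₀ hy₀ x hx⟩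
  refine le_antisymm ?_ (csSup_le ⟨y₀, hy₀⟩ fun y hy => le_csInf hne_p fun x hx => weak y hy x hx)
  by_contra hcon
  push_neg at hcon
  set t : ℝ := (sSup Sd + sInf Sp) / 2 with ht
  have ht1 : sSup Sd < t := by rw [ht]; linarith
  have ht2 : t < sInf Sp := by rw [ht]; linarith
  have hnotin : ((a, b, t) : (Fin M → ℝ) × (Fin M → ℝ) × ℝ) ∉ OTcone C := by
    rintro ⟨P, h0, h1, h2, h3⟩
    have hmem : (∑ i, ∑ j, P i j * C i j) ∈ Sp := ⟨P, h0, h1, h2, rfl⟩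
    have := csInf_le hbddB hmem
    have h3' : ∑ i, ∑ j, P i j * C i j ≤ t := h3
    linarith
  obtain ⟨f, u, hfu, hux⟩ :=
    geometric_hahn_banach_closed_point (OTcone_convex C) (OTcone_isClosed C) hnotin
  have hzero : (0 : (Fin M → ℝ) × (Fin M → ℝ) × ℝ) ∈ OTcone C :=
    ⟨0, fun i j => le_refl 0, fun i => by simp, fun j => by simp, by simp⟩
  have hu : 0 < u := by have := hfu 0 hzero; simpa using this
  have hfle : ∀ v ∈ OTcone C, f v ≤ 0 := by
    intro v hv
    by_contra hpos
    push_neg at hpos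
    have hc : (0:ℝ) ≤ (u + 1) / f v := div_nonneg (by linarith) hpos.le
    have := hfu _ (OTcone_smul C hc hv)
    rw [map_smul, smul_eq_mul, div_mul_cancel₀ _ (ne_of_gt hpos)] at this
    linarith
  set β1 : Fin M → ℝ := fun i => f (Pi.single i 1, 0, 0) with hβ1
  set β2 : Fin M → ℝ := fun j => f (0, Pi.single j 1, 0) with hβ2
  set γ : ℝ := f (0, 0, 1) with hγdef
  have hgen : ∀ i j, β1 i + β2 j + C i j * γ ≤ 0 := by
    intro i j
    have hmem : ((Pi.single i 1 : Fin M → ℝ), (Pi.single j 1 : Fin M → ℝ), C i j)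
        ∈ OTcone C := by
      refine ⟨fun i' j' => (if i' = i then (1:ℝ) else 0) * (if j' = j then 1 else 0),
        fun i' j' => by dsimp only; split_ifs <;> norm_num, fun i' => ?_, fun j' => ?_,
        le_of_eq ?_⟩
      · rw [← Finset.mul_sum]
        simp [Finset.sum_ite_eq', Pi.single_apply]
      · rw [← Finset.sum_mul]
        simp [Finset.sum_ite_eq', Pi.single_apply]
      · have hrow : ∀ i', ∑ j', ((if i' = i then (1:ℝ) else 0) * (if j' = j then 1 else 0))
            * C i' j' = (if i' = i then (1:ℝ) else 0) * C i' j := by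
          intro i'
          simp only [mul_assoc]
          rw [← Finset.mul_sum]
          congr 1
          simp [ite_mul, Finset.sum_ite_eq']
        rw [Finset.sum_congr rfl fun i' _ => hrow i']
        simp [ite_mul, Finset.sum_ite_eq']
    have h := hfle _ hmem
    rw [OT_decomp] at h
    have e1 : ∑ k, (Pi.single i 1 : Fin M → ℝ) k * f (Pi.single k 1, 0, 0)
        = f (Pi.single i 1, 0, 0) := by
      simp [Pi.single_apply, ite_mul, Finset.sum_ite_eq']
    have e2 : ∑ k, (Pi.single j 1 : Fin M → ℝ) k * f (0, Pi.single k 1, 0)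
        = f (0, Pi.single j 1, 0) := by
      simp [Pi.single_apply, ite_mul, Finset.sum_ite_eq']
    rw [e1, e2] at h
    exact h
  have hγ : γ ≤ 0 := by
    have := hfle (0, 0, 1)
      ⟨0, fun i j => le_refl 0, fun i => by simp, fun j => by simp, by norm_num⟩
    exact this
  have hval : u < (∑ i, a i * β1 i) + (∑ j, b j * β2 j) + t * γ := by
    have := hux
    rw [OT_decomp] at this
    exact this
  rcases hγ.lt_or_eq with hγneg | hγ0
  · -- γ < 0 : rescale to get a dual feasible point with value > t
    have hν : 0 < -γ := by linarith
    have hfeas : ∀ i j, β1 i / (-γ) + β2 j / (-γ) ≤ C i j := by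
      intro i j
      rw [← add_div, div_le_iff₀ hν]
      have h := hgen i j
      nlinarith [hgen i j]
    have hy' : ((∑ i, a i * β1 i) + (∑ j, b j * β2 j)) / (-γ)
        = (∑ i, a i * (β1 i / (-γ))) + (∑ j, b j * (β2 j / (-γ))) := by
      rw [add_div, Finset.sum_div, Finset.sum_div]
      congr 1 <;> exact Finset.sum_congr rfl fun k _ => (mul_div_assoc _ _ _)
    have hmem' : ((∑ i, a i * β1 i) + (∑ j, b j * β2 j)) / (-γ) ∈ Sd :=
      ⟨(fun i => β1 i / (-γ), fun j => β2 j / (-γ)), hfeas, hy'⟩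
    have hle := le_csSup hbddA hmem'
    have hyt : t < ((∑ i, a i * β1 i) + (∑ j, b j * β2 j)) / (-γ) := by
      rw [lt_div_iff₀ hν]
      nlinarith [hval, hu]
    linarith
  · -- γ = 0 : contradiction with feasibility of P₀
    have hββ : ∀ i j, β1 i + β2 j ≤ 0 := by
      intro i j
      have := hgen i j
      rw [hγ0] at this
      simpa using this
    have hsum : (∑ i, a i * β1 i) + (∑ j, b j * β2 j) ≤ 0 := by
      rw [OT_margsum P₀ a b β1 β2 hP₀1 hP₀2]
      exact Finset.sum_nonpos fun i _ => Finset.sum_nonpos fun j _ => by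
        nlinarith [hP₀0 i j, hββ i j]
    rw [hγ0] at hval
    simp only [mul_zero, add_zero] at hval
    linarith
end

section
/- The Legendre–Fenchel conjugate of the entropic regularized transport cost MK_λ(α) = min{⟨p, c + (1/λ)log p⟩ : p ∈ ℝ₊^{M²}, Lᵀp = α} + χ_Δ(α) is MK*_λ(β) = (1/λ)⟨q_λ(β), 1⟩ where q_λ(β) = exp(λ(Lβ − c) − 1) (componentwise exponential). -/
open scoped BigOperators Classical

/-- The entropic regularized transport cost `MK_λ`, with value `⊤` outside
the set `Δ` of pairs of equal-mass nonnegative histograms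
(the convention `0 · log 0 = 0` is automatic since `Real.log 0 = 0`). -/
noncomputable def MKlam (M : ℕ) (lam : ℝ) (C : Matrix (Fin M) (Fin M) ℝ)
    (α : (Fin M → ℝ) × (Fin M → ℝ)) : EReal :=
  if (∀ i, 0 ≤ α.1 i) ∧ (∀ j, 0 ≤ α.2 j) ∧ (∑ i, α.1 i) = (∑ j, α.2 j) then
    (((sInf {x : ℝ | ∃ P : Matrix (Fin M) (Fin M) ℝ,
      (∀ i j, 0 ≤ P i j) ∧ (∀ i, ∑ j, P i j = α.1 i) ∧ (∀ j, ∑ i, P i j = α.2 j) ∧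
      x = ∑ i, ∑ j, P i j * (C i j + (1 / lam) * Real.log (P i j))}) : ℝ) : EReal)
  else ⊤

private lemma key0 (s p : ℝ) (hp : 0 ≤ p) : p * s - p * Real.log p ≤ Real.exp (s - 1) := by
  rcases hp.eq_or_lt with h | h
  · simp [← h, (Real.exp_pos _).le]
  · have h2 : Real.exp (s - Real.log p - 1) = Real.exp (s - 1) / p := by
      rw [show s - Real.log p - 1 = (s - 1) - Real.log p by ring, Real.exp_sub, Real.exp_log h]
    have h3 : s - Real.log p ≤ Real.exp (s - 1) / p := by
      have h1 := Real.add_one_le_exp (s - Real.log p - 1)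
      rw [h2] at h1; linarith
    have h4 := mul_le_mul_of_nonneg_left h3 h.le
    rw [mul_comm p (Real.exp (s-1) / p), div_mul_cancel₀ _ h.ne'] at h4
    nlinarith [h4]

private lemma key_le (lam : ℝ) (hlam : 0 < lam) (u p : ℝ) (hp : 0 ≤ p) :
    p * u - 1 / lam * (p * Real.log p) ≤ 1 / lam * Real.exp (lam * u - 1) := by
  have h0 := key0 (lam * u) p hp
  rw [← mul_le_mul_iff_right₀ hlam]
  have e1 : lam * (p * u - 1 / lam * (p * Real.log p)) = p * (lam * u) - p * Real.log p := by
    field_simp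
  have e2 : lam * (1 / lam * Real.exp (lam * u - 1)) = Real.exp (lam * u - 1) := by
    field_simp
  rw [e1, e2]; exact h0

private lemma key_eq (lam : ℝ) (hlam : 0 < lam) (u : ℝ) :
    Real.exp (lam * u - 1) * u -
      1 / lam * (Real.exp (lam * u - 1) * Real.log (Real.exp (lam * u - 1)))
      = 1 / lam * Real.exp (lam * u - 1) := by
  rw [Real.log_exp]; field_simp; ring

private lemma pair_sum (M : ℕ) (β : (Fin M → ℝ) × (Fin M → ℝ))
    (α : (Fin M → ℝ) × (Fin M → ℝ)) (P : Matrix (Fin M) (Fin M) ℝ)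
    (hP1 : ∀ i, ∑ j, P i j = α.1 i) (hP2 : ∀ j, ∑ i, P i j = α.2 j) :
    (∑ i, α.1 i * β.1 i) + ∑ j, α.2 j * β.2 j
      = ∑ i, ∑ j, P i j * (β.1 i + β.2 j) := by
  have h1 : ∑ i, α.1 i * β.1 i = ∑ i, ∑ j, P i j * β.1 i := by
    refine Finset.sum_congr rfl fun i _ => ?_
    rw [← Finset.sum_mul, hP1 i]
  have h2 : ∑ j, α.2 j * β.2 j = ∑ i, ∑ j, P i j * β.2 j := by
    rw [Finset.sum_comm]
    refine Finset.sum_congr rfl fun j _ => ?_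
    rw [← Finset.sum_mul, hP2 j]
  rw [h1, h2, ← Finset.sum_add_distrib]
  refine Finset.sum_congr rfl fun i _ => ?_
  rw [← Finset.sum_add_distrib]
  exact Finset.sum_congr rfl fun j _ => by ring

private lemma lb_aux (M : ℕ) (lam : ℝ) (hlam : 0 < lam)
    (C : Matrix (Fin M) (Fin M) ℝ) (β α : (Fin M → ℝ) × (Fin M → ℝ)) (x : ℝ)
    (hx : x ∈ {x : ℝ | ∃ P : Matrix (Fin M) (Fin M) ℝ,
      (∀ i j, 0 ≤ P i j) ∧ (∀ i, ∑ j, P i j = α.1 i) ∧ (∀ j, ∑ i, P i j = α.2 j) ∧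
      x = ∑ i, ∑ j, P i j * (C i j + (1 / lam) * Real.log (P i j))}) :
    ((∑ i, α.1 i * β.1 i) + ∑ j, α.2 j * β.2 j)
      - (1 / lam * ∑ i, ∑ j, Real.exp (lam * (β.1 i + β.2 j - C i j) - 1)) ≤ x := by
  obtain ⟨P, hP0, hP1, hP2, hxe⟩ := hx
  have hA := pair_sum M β α P hP1 hP2
  have hR : (1 : ℝ) / lam * ∑ i, ∑ j, Real.exp (lam * (β.1 i + β.2 j - C i j) - 1)
      = ∑ i, ∑ j, 1 / lam * Real.exp (lam * (β.1 i + β.2 j - C i j) - 1) := by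
    rw [Finset.mul_sum]
    exact Finset.sum_congr rfl fun i _ => by rw [Finset.mul_sum]
  have step : ∑ i, ∑ j, (P i j * (β.1 i + β.2 j)
        - P i j * (C i j + 1 / lam * Real.log (P i j)))
      ≤ ∑ i, ∑ j, 1 / lam * Real.exp (lam * (β.1 i + β.2 j - C i j) - 1) := by
    refine Finset.sum_le_sum fun i _ => Finset.sum_le_sum fun j _ => ?_
    have h := key_le lam hlam (β.1 i + β.2 j - C i j) (P i j) (hP0 i j)
    have e : P i j * (β.1 i + β.2 j) - P i j * (C i j + 1 / lam * Real.log (P i j))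
        = P i j * (β.1 i + β.2 j - C i j) - 1 / lam * (P i j * Real.log (P i j)) := by ring
    rw [e]; exact h
  have hsplit : ∑ i, ∑ j, (P i j * (β.1 i + β.2 j)
        - P i j * (C i j + 1 / lam * Real.log (P i j)))
      = (∑ i, ∑ j, P i j * (β.1 i + β.2 j))
        - ∑ i, ∑ j, P i j * (C i j + 1 / lam * Real.log (P i j)) := by
    rw [← Finset.sum_sub_distrib]
    exact Finset.sum_congr rfl fun i _ => by rw [← Finset.sum_sub_distrib]
  rw [hsplit] at step
  rw [hA, hR, hxe]
  linarith [step]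


/-- the Legendre–Fenchel conjugate of `MK_λ` is
`MK*_λ(β) = (1/λ) ⟨q_λ(β), 1⟩` with `q_λ(β) = exp(λ(Lβ − c) − 1)`. -/
theorem stmt_9 (M : ℕ) (lam : ℝ) (hlam : 0 < lam)
    (C : Matrix (Fin M) (Fin M) ℝ)
    (β : (Fin M → ℝ) × (Fin M → ℝ)) :
    (⨆ α : (Fin M → ℝ) × (Fin M → ℝ),
        (((∑ i, α.1 i * β.1 i) + (∑ j, α.2 j * β.2 j) : ℝ) : EReal) - MKlam M lam C α)
      = (((1 / lam) * ∑ i, ∑ j,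
          Real.exp (lam * (β.1 i + β.2 j - C i j) - 1) : ℝ) : EReal) := by
  apply le_antisymm
  · refine iSup_le fun α => ?_
    by_cases hα : (∀ i, 0 ≤ α.1 i) ∧ (∀ j, 0 ≤ α.2 j) ∧ (∑ i, α.1 i) = (∑ j, α.2 j)
    · obtain ⟨h1, h2, h3⟩ := hα
      rw [MKlam, if_pos ⟨h1, h2, h3⟩, ← EReal.coe_sub, EReal.coe_le_coe_iff]
      -- nonemptiness of the coupling set
      have hne : {x : ℝ | ∃ P : Matrix (Fin M) (Fin M) ℝ,
          (∀ i j, 0 ≤ P i j) ∧ (∀ i, ∑ j, P i j = α.1 i) ∧ (∀ j, ∑ i, P i j = α.2 j) ∧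
          x = ∑ i, ∑ j, P i j * (C i j + (1 / lam) * Real.log (P i j))}.Nonempty := by
        refine ⟨_, (fun i j => α.1 i * α.2 j / (∑ k, α.1 k)), ?_, ?_, ?_, rfl⟩
        · intro i j
          exact div_nonneg (mul_nonneg (h1 i) (h2 j)) (Finset.sum_nonneg fun k _ => h1 k)
        · intro i
          rw [← Finset.sum_div, ← Finset.mul_sum, ← h3]
          by_cases hs0 : (∑ k, α.1 k) = 0
          · have hz : α.1 i = 0 :=
              (Finset.sum_eq_zero_iff_of_nonneg (fun k _ => h1 k)).mp hs0 i (Finset.mem_univ i)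
            simp [hz]
          · rw [mul_div_assoc, div_self hs0, mul_one]
        · intro j
          rw [← Finset.sum_div, ← Finset.sum_mul]
          by_cases hs0 : (∑ k, α.1 k) = 0
          · have hz : α.2 j = 0 := by
              have h4 : (∑ k, α.2 k) = 0 := by rw [← h3]; exact hs0
              exact (Finset.sum_eq_zero_iff_of_nonneg (fun k _ => h2 k)).mp h4 j (Finset.mem_univ j)
            simp [hz]
          · rw [mul_comm, mul_div_assoc, div_self hs0, mul_one]
      have hlow := le_csInf hne (fun x hx => lb_aux M lam hlam C β α x hx)
      linarith [hlow]
    · rw [MKlam, if_neg hα, EReal.sub_top]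
      exact bot_le
  · set Ps : Matrix (Fin M) (Fin M) ℝ :=
      fun i j => Real.exp (lam * (β.1 i + β.2 j - C i j) - 1) with hPs
    set αs : (Fin M → ℝ) × (Fin M → ℝ) :=
      (fun i => ∑ j, Ps i j, fun j => ∑ i, Ps i j) with hαs
    have hfeas : (∀ i, 0 ≤ αs.1 i) ∧ (∀ j, 0 ≤ αs.2 j) ∧ (∑ i, αs.1 i) = (∑ j, αs.2 j) := by
      refine ⟨fun i => ?_, fun j => ?_, ?_⟩
      · show (0:ℝ) ≤ ∑ j, Ps i j
        exact Finset.sum_nonneg fun j _ => (Real.exp_pos _).le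
      · show (0:ℝ) ≤ ∑ i, Ps i j
        exact Finset.sum_nonneg fun i _ => (Real.exp_pos _).le
      · show (∑ i, ∑ j, Ps i j) = ∑ j, ∑ i, Ps i j
        exact Finset.sum_comm
    refine le_trans ?_ (le_iSup _ αs)
    rw [MKlam, if_pos hfeas, ← EReal.coe_sub, EReal.coe_le_coe_iff]
    have hmem : (∑ i, ∑ j, Ps i j * (C i j + (1 / lam) * Real.log (Ps i j))) ∈
        {x : ℝ | ∃ P : Matrix (Fin M) (Fin M) ℝ,
          (∀ i j, 0 ≤ P i j) ∧ (∀ i, ∑ j, P i j = αs.1 i) ∧ (∀ j, ∑ i, P i j = αs.2 j) ∧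
          x = ∑ i, ∑ j, P i j * (C i j + (1 / lam) * Real.log (P i j))} :=
      ⟨Ps, fun i j => (Real.exp_pos _).le, fun i => rfl, fun j => rfl, rfl⟩
    have hbdd : BddBelow {x : ℝ | ∃ P : Matrix (Fin M) (Fin M) ℝ,
        (∀ i j, 0 ≤ P i j) ∧ (∀ i, ∑ j, P i j = αs.1 i) ∧ (∀ j, ∑ i, P i j = αs.2 j) ∧
        x = ∑ i, ∑ j, P i j * (C i j + (1 / lam) * Real.log (P i j))} :=
      ⟨_, fun x hx => lb_aux M lam hlam C β αs x hx⟩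
    have hInf := csInf_le hbdd hmem
    have hA := pair_sum M β αs Ps (fun i => rfl) (fun j => rfl)
    have hcost : (∑ i, ∑ j, Ps i j * (β.1 i + β.2 j))
        - (∑ i, ∑ j, Ps i j * (C i j + (1 / lam) * Real.log (Ps i j)))
        = 1 / lam * ∑ i, ∑ j, Real.exp (lam * (β.1 i + β.2 j - C i j) - 1) := by
      rw [← Finset.sum_sub_distrib]
      rw [show (1:ℝ) / lam * ∑ i, ∑ j, Real.exp (lam * (β.1 i + β.2 j - C i j) - 1)
          = ∑ i, ∑ j, 1 / lam * Real.exp (lam * (β.1 i + β.2 j - C i j) - 1) by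
        rw [Finset.mul_sum]; exact Finset.sum_congr rfl fun i _ => by rw [Finset.mul_sum]]
      refine Finset.sum_congr rfl fun i _ => ?_
      rw [← Finset.sum_sub_distrib]
      refine Finset.sum_congr rfl fun j _ => ?_
      have h := key_eq lam hlam (β.1 i + β.2 j - C i j)
      have e : Ps i j = Real.exp (lam * (β.1 i + β.2 j - C i j) - 1) := rfl
      rw [e]
      rw [show Real.exp (lam * (β.1 i + β.2 j - C i j) - 1) * (β.1 i + β.2 j)
          - Real.exp (lam * (β.1 i + β.2 j - C i j) - 1)
            * (C i j + 1 / lam * Real.log (Real.exp (lam * (β.1 i + β.2 j - C i j) - 1)))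
          = Real.exp (lam * (β.1 i + β.2 j - C i j) - 1) * (β.1 i + β.2 j - C i j)
            - 1 / lam * (Real.exp (lam * (β.1 i + β.2 j - C i j) - 1)
              * Real.log (Real.exp (lam * (β.1 i + β.2 j - C i j) - 1))) by ring]
      exact h
    rw [hA]
    linarith [hInf, hcost]
end

section
/- Let MK_{λ,≤N}(α) = min{⟨p, c + (1/λ)log p − (log N / λ)1⟩ : p ≥ 0, Lᵀp = α} + χ_{Δ_{≤N}}(α), where Δ_{≤N} is the set of equal-mass nonnegative histogram pairs with mass at most N. Then its convex conjugate is MK*_{λ,≤N}(β) = (N/λ)⟨q_λ(β), 1⟩ if ⟨q_λ(β), 1⟩ ≤ 1, and (N/λ)log⟨q_λ(β), 1⟩ + N/λ if ⟨q_λ(β), 1⟩ ≥ 1, with q_λ(β) = exp(λ(Lβ − c) − 1). -/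
open scoped BigOperators Classical

private lemma lemA (x t : ℝ) (hx : 0 ≤ x) :
    x * t - x * Real.log x ≤ Real.exp (t - 1) := by
  rcases hx.eq_or_lt with h | h
  · rw [← h]; simp; positivity
  · have h1 := Real.add_one_le_exp (t - 1 - Real.log x)
    have h2 : Real.exp (t - 1 - Real.log x) * x = Real.exp (t - 1) := by
      rw [Real.exp_sub, Real.exp_log h]
      field_simp
    nlinarith [mul_le_mul_of_nonneg_right h1 hx, h2]

private lemma lemB1 (lam Nr : ℝ) (hlam : 0 < lam) (hN : 0 < Nr)
    (θ b x : ℝ) (hx : 0 ≤ x) :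
    x * b - (1/lam) * (x * Real.log x - x * Real.log Nr) ≤
      Nr / lam * Real.exp (lam * b - 1) * Real.exp (-θ) + θ / lam * x := by
  rcases hx.eq_or_lt with h | h
  · rw [← h]; simp; positivity
  · have key := lemA (x / Nr) (lam * b - θ) (by positivity)
    rw [Real.log_div h.ne' hN.ne'] at key
    have e1 : Real.exp (lam * b - θ - 1) = Real.exp (lam * b - 1) * Real.exp (-θ) := by
      rw [← Real.exp_add]; ring_nf
    rw [e1] at key
    have h3 := mul_le_mul_of_nonneg_left key (le_of_lt (div_pos hN hlam))
    have h4 : Nr / lam * (x / Nr * (lam * b - θ) - x / Nr * (Real.log x - Real.log Nr))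
        = x * b - θ / lam * x - (1/lam) * (x * Real.log x - x * Real.log Nr) := by
      field_simp
    rw [h4] at h3
    linarith [h3]

private lemma sum_split (M : ℕ) (f g h : Fin M → Fin M → ℝ) :
    (∑ i, ∑ j, f i j) + (∑ i, ∑ j, g i j) - (∑ i, ∑ j, h i j)
      = ∑ i, ∑ j, (f i j + g i j - h i j) := by
  rw [← Finset.sum_add_distrib, ← Finset.sum_sub_distrib]
  exact Finset.sum_congr rfl fun i _ => by
    rw [← Finset.sum_add_distrib, ← Finset.sum_sub_distrib]

/-- The normalized entropic transport cost `MK_{λ,≤N}`, with value `⊤` outside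
the set `Δ_{≤N}` of equal-mass nonnegative histogram pairs of mass at most `N`. -/
noncomputable def MKlamLeN (M : ℕ) (lam Nr : ℝ) (C : Matrix (Fin M) (Fin M) ℝ)
    (α : (Fin M → ℝ) × (Fin M → ℝ)) : EReal :=
  if (∀ i, 0 ≤ α.1 i) ∧ (∀ j, 0 ≤ α.2 j) ∧ (∑ i, α.1 i) = (∑ j, α.2 j) ∧
      (∑ i, α.1 i) ≤ Nr then
    (((sInf {x : ℝ | ∃ P : Matrix (Fin M) (Fin M) ℝ,
      (∀ i j, 0 ≤ P i j) ∧ (∀ i, ∑ j, P i j = α.1 i) ∧ (∀ j, ∑ i, P i j = α.2 j) ∧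
      x = ∑ i, ∑ j, P i j *
        (C i j + (1 / lam) * Real.log (P i j) - Real.log Nr / lam)}) : ℝ) : EReal)
  else ⊤

/-- the convex conjugate of `MK_{λ,≤N}` equals
`(N/λ)⟨q_λ(β),1⟩` when `⟨q_λ(β),1⟩ ≤ 1`, and
`(N/λ)log⟨q_λ(β),1⟩ + N/λ` when `⟨q_λ(β),1⟩ ≥ 1`,
where `q_λ(β) = exp(λ(Lβ − c) − 1)`. -/
theorem stmt_10 (M : ℕ) (lam Nr : ℝ) (hlam : 0 < lam) (hN : 0 < Nr)
    (C : Matrix (Fin M) (Fin M) ℝ)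
    (β : (Fin M → ℝ) × (Fin M → ℝ)) :
    letI S : ℝ := ∑ i, ∑ j, Real.exp (lam * (β.1 i + β.2 j - C i j) - 1)
    (⨆ α : (Fin M → ℝ) × (Fin M → ℝ),
        (((∑ i, α.1 i * β.1 i) + (∑ j, α.2 j * β.2 j) : ℝ) : EReal)
          - MKlamLeN M lam Nr C α)
      = if S ≤ 1 then (((Nr / lam) * S : ℝ) : EReal)
        else (((Nr / lam) * Real.log S + Nr / lam : ℝ) : EReal) := by
  set S : ℝ := ∑ i, ∑ j, Real.exp (lam * (β.1 i + β.2 j - C i j) - 1) with hS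
  set V : ℝ := if S ≤ 1 then Nr / lam * S else Nr / lam * Real.log S + Nr / lam with hV
  have hRHS : (if S ≤ 1 then (((Nr / lam) * S : ℝ) : EReal)
        else (((Nr / lam) * Real.log S + Nr / lam : ℝ) : EReal)) = ((V : ℝ) : EReal) := by
    rw [hV]; split_ifs <;> rfl
  rw [hRHS]
  -- the key Fenchel-type inequality
  have key : ∀ (a1 a2 : Fin M → ℝ), (∀ i, 0 ≤ a1 i) → (∑ i, a1 i) ≤ Nr →
      ∀ (P : Matrix (Fin M) (Fin M) ℝ), (∀ i j, 0 ≤ P i j) → (∀ i, ∑ j, P i j = a1 i) →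
      (∀ j, ∑ i, P i j = a2 j) →
      ((∑ i, a1 i * β.1 i) + (∑ j, a2 j * β.2 j))
        - (∑ i, ∑ j, P i j *
            (C i j + (1 / lam) * Real.log (P i j) - Real.log Nr / lam)) ≤ V := by
    intro a1 a2 ha1 hmass P hP0 hrow hcol
    set θ : ℝ := if S ≤ 1 then 0 else Real.log S with hθ
    have e1 : (∑ i, a1 i * β.1 i) = ∑ i, ∑ j, P i j * β.1 i := by
      refine Finset.sum_congr rfl fun i _ => ?_
      rw [← hrow i, Finset.sum_mul]
    have e2 : (∑ j, a2 j * β.2 j) = ∑ i, ∑ j, P i j * β.2 j := by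
      rw [Finset.sum_comm]
      refine Finset.sum_congr rfl fun j _ => ?_
      rw [← hcol j, Finset.sum_mul]
    have hmass' : (∑ i, ∑ j, P i j) ≤ Nr := by
      calc (∑ i, ∑ j, P i j) = ∑ i, a1 i := Finset.sum_congr rfl fun i _ => hrow i
      _ ≤ Nr := hmass
    have hmass0 : 0 ≤ ∑ i, ∑ j, P i j :=
      Finset.sum_nonneg fun i _ => Finset.sum_nonneg fun j _ => hP0 i j
    have step : ∀ i j, P i j * β.1 i + P i j * β.2 j
        - P i j * (C i j + (1 / lam) * Real.log (P i j) - Real.log Nr / lam)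
        ≤ Nr / lam * Real.exp (lam * (β.1 i + β.2 j - C i j) - 1) * Real.exp (-θ)
          + θ / lam * P i j := by
      intro i j
      have hb := lemB1 lam Nr hlam hN θ (β.1 i + β.2 j - C i j) (P i j) (hP0 i j)
      have : P i j * β.1 i + P i j * β.2 j
          - P i j * (C i j + (1 / lam) * Real.log (P i j) - Real.log Nr / lam)
          = P i j * (β.1 i + β.2 j - C i j)
            - (1/lam) * (P i j * Real.log (P i j) - P i j * Real.log Nr) := by ring
      rw [this]
      exact hb
    rw [e1, e2, sum_split]
    have sum_ineq : (∑ i, ∑ j, (P i j * β.1 i + P i j * β.2 j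
        - P i j * (C i j + (1 / lam) * Real.log (P i j) - Real.log Nr / lam)))
        ≤ ∑ i, ∑ j, (Nr / lam * Real.exp (lam * (β.1 i + β.2 j - C i j) - 1) * Real.exp (-θ)
            + θ / lam * P i j) :=
      Finset.sum_le_sum fun i _ => Finset.sum_le_sum fun j _ => step i j
    have rhs_eq : (∑ i, ∑ j, (Nr / lam * Real.exp (lam * (β.1 i + β.2 j - C i j) - 1)
          * Real.exp (-θ) + θ / lam * P i j))
        = Nr / lam * Real.exp (-θ) * S + θ / lam * (∑ i, ∑ j, P i j) := by
      rw [hS]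
      have e3 : ∀ i j, Nr / lam * Real.exp (lam * (β.1 i + β.2 j - C i j) - 1) * Real.exp (-θ)
          + θ / lam * P i j
          = (Nr / lam * Real.exp (-θ)) * Real.exp (lam * (β.1 i + β.2 j - C i j) - 1)
            + (θ / lam) * P i j := fun i j => by ring
      simp_rw [e3, Finset.sum_add_distrib, ← Finset.mul_sum]
    rw [rhs_eq] at sum_ineq
    by_cases hc : S ≤ 1
    · have hθ0 : θ = 0 := by rw [hθ, if_pos hc]
      rw [hθ0] at sum_ineq
      simp only [neg_zero, Real.exp_zero, mul_one, zero_div, zero_mul, add_zero] at sum_ineq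
      rw [hV, if_pos hc]
      linarith
    · have h1 : 1 < S := lt_of_not_ge hc
      have hSpos : 0 < S := lt_trans one_pos h1
      have hθS : θ = Real.log S := by rw [hθ, if_neg hc]
      have hexp : Nr / lam * Real.exp (-θ) * S = Nr / lam := by
        rw [hθS, Real.exp_neg, Real.exp_log hSpos]
        field_simp
      have hθ0 : 0 ≤ θ / lam := by
        apply div_nonneg _ hlam.le
        rw [hθS]; exact (Real.log_pos h1).le
      have h2 : θ / lam * (∑ i, ∑ j, P i j) ≤ θ / lam * Nr :=
        mul_le_mul_of_nonneg_left hmass' hθ0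
      have h3 : θ / lam * Nr = Nr / lam * Real.log S := by rw [hθS]; ring
      rw [hV, if_neg hc]
      linarith
  refine le_antisymm (iSup_le fun α => ?_) ?_
  · by_cases hΔ : (∀ i, 0 ≤ α.1 i) ∧ (∀ j, 0 ≤ α.2 j) ∧ (∑ i, α.1 i) = (∑ j, α.2 j) ∧
        (∑ i, α.1 i) ≤ Nr
    · rw [MKlamLeN, if_pos hΔ, ← EReal.coe_sub, EReal.coe_le_coe_iff]
      obtain ⟨h1, h2, h3, h4⟩ := hΔ
      have hne : {x : ℝ | ∃ P : Matrix (Fin M) (Fin M) ℝ,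
          (∀ i j, 0 ≤ P i j) ∧ (∀ i, ∑ j, P i j = α.1 i) ∧ (∀ j, ∑ i, P i j = α.2 j) ∧
          x = ∑ i, ∑ j, P i j *
            (C i j + (1 / lam) * Real.log (P i j) - Real.log Nr / lam)}.Nonempty := by
        by_cases hm : (∑ i, α.1 i) = 0
        · have hz1 : ∀ i, α.1 i = 0 := fun i =>
            (Finset.sum_eq_zero_iff_of_nonneg (fun i _ => h1 i)).mp hm i (Finset.mem_univ i)
          have hz2 : ∀ j, α.2 j = 0 := fun j =>
            (Finset.sum_eq_zero_iff_of_nonneg (fun j _ => h2 j)).mp (h3 ▸ hm) j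
              (Finset.mem_univ j)
          exact ⟨0, 0, fun i j => le_refl 0, fun i => by simp [hz1 i],
            fun j => by simp [hz2 j], by simp⟩
        · refine ⟨_, fun i j => α.1 i * α.2 j / (∑ k, α.1 k), fun i j => ?_, fun i => ?_,
            fun j => ?_, rfl⟩
          · exact div_nonneg (mul_nonneg (h1 i) (h2 j))
              (Finset.sum_nonneg fun k _ => h1 k)
          · rw [← Finset.sum_div, ← Finset.mul_sum, ← h3, mul_div_assoc, div_self hm, mul_one]
          · rw [← Finset.sum_div, ← Finset.sum_mul, mul_comm, mul_div_assoc, div_self hm,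
              mul_one]
      have hlb : (∑ i, α.1 i * β.1 i) + (∑ j, α.2 j * β.2 j) - V
          ≤ sInf {x : ℝ | ∃ P : Matrix (Fin M) (Fin M) ℝ,
            (∀ i j, 0 ≤ P i j) ∧ (∀ i, ∑ j, P i j = α.1 i) ∧ (∀ j, ∑ i, P i j = α.2 j) ∧
            x = ∑ i, ∑ j, P i j *
              (C i j + (1 / lam) * Real.log (P i j) - Real.log Nr / lam)} := by
        refine le_csInf hne ?_
        rintro x ⟨P, hP0, hrow, hcol, rfl⟩
        linarith [key α.1 α.2 h1 h4 P hP0 hrow hcol]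
      linarith
    · rw [MKlamLeN, if_neg hΔ, EReal.sub_top]
      exact bot_le
  · -- lower bound: take the explicit maximizer
    set r : ℝ := if S ≤ 1 then 1 else S with hr
    have hr1 : 1 ≤ r := by
      rw [hr]; split_ifs with h
      · exact le_refl 1
      · exact (lt_of_not_ge h).le
    have hr0 : 0 < r := lt_of_lt_of_le one_pos hr1
    have hSr : S ≤ r := by
      rw [hr]; split_ifs with h
      · exact h
      · exact le_refl S
    set Pstar : Matrix (Fin M) (Fin M) ℝ :=
      fun i j => Nr / r * Real.exp (lam * (β.1 i + β.2 j - C i j) - 1) with hP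
    have hPval : ∀ i j, Pstar i j = Nr / r * Real.exp (lam * (β.1 i + β.2 j - C i j) - 1) :=
      fun i j => rfl
    have hPpos : ∀ i j, 0 ≤ Pstar i j := fun i j => by
      rw [hPval]
      exact mul_nonneg (div_nonneg hN.le hr0.le) (Real.exp_nonneg _)
    set a1 : Fin M → ℝ := fun i => ∑ j, Pstar i j with ha1
    set a2 : Fin M → ℝ := fun j => ∑ i, Pstar i j with ha2
    have hmassP : (∑ i, ∑ j, Pstar i j) = Nr / r * S := by
      rw [hS]
      simp_rw [hPval, ← Finset.mul_sum]
    have hmassle : (∑ i, a1 i) ≤ Nr := by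
      have hsum1 : (∑ i, a1 i) = ∑ i, ∑ j, Pstar i j := rfl
      rw [hsum1, hmassP]
      calc Nr / r * S ≤ Nr / r * r := by
            exact mul_le_mul_of_nonneg_left hSr (le_of_lt (div_pos hN hr0))
      _ = Nr := div_mul_cancel₀ Nr hr0.ne'
    have hΔ : (∀ i, 0 ≤ a1 i) ∧ (∀ j, 0 ≤ a2 j) ∧ (∑ i, a1 i) = (∑ j, a2 j) ∧
        (∑ i, a1 i) ≤ Nr := by
      refine ⟨fun i => Finset.sum_nonneg fun j _ => hPpos i j,
        fun j => Finset.sum_nonneg fun i _ => hPpos i j, ?_, hmassle⟩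
      show (∑ i, ∑ j, Pstar i j) = ∑ j, ∑ i, Pstar i j
      exact Finset.sum_comm
    refine le_iSup_of_le (a1, a2) ?_
    rw [MKlamLeN, if_pos hΔ, ← EReal.coe_sub, EReal.coe_le_coe_iff]
    -- the infimum is at most the cost of Pstar
    have hmem : (∑ i, ∑ j, Pstar i j *
        (C i j + (1 / lam) * Real.log (Pstar i j) - Real.log Nr / lam)) ∈
        {x : ℝ | ∃ P : Matrix (Fin M) (Fin M) ℝ,
          (∀ i j, 0 ≤ P i j) ∧ (∀ i, ∑ j, P i j = a1 i) ∧ (∀ j, ∑ i, P i j = a2 j) ∧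
          x = ∑ i, ∑ j, P i j *
            (C i j + (1 / lam) * Real.log (P i j) - Real.log Nr / lam)} :=
      ⟨Pstar, hPpos, fun i => rfl, fun j => rfl, rfl⟩
    have hbdd : BddBelow {x : ℝ | ∃ P : Matrix (Fin M) (Fin M) ℝ,
        (∀ i j, 0 ≤ P i j) ∧ (∀ i, ∑ j, P i j = a1 i) ∧ (∀ j, ∑ i, P i j = a2 j) ∧
        x = ∑ i, ∑ j, P i j *
          (C i j + (1 / lam) * Real.log (P i j) - Real.log Nr / lam)} := by
      refine ⟨(∑ i, a1 i * β.1 i) + (∑ j, a2 j * β.2 j) - V, ?_⟩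
      rintro x ⟨P, hP0, hrow, hcol, rfl⟩
      have := key a1 a2 hΔ.1 hmassle P hP0 hrow hcol
      linarith
    have hinf := csInf_le hbdd hmem
    -- compute the value at Pstar
    have hlogP : ∀ i j, Real.log (Pstar i j)
        = Real.log Nr - Real.log r + (lam * (β.1 i + β.2 j - C i j) - 1) := by
      intro i j
      rw [hPval i j, Real.log_mul (div_pos hN hr0).ne' (Real.exp_ne_zero _),
        Real.log_div hN.ne' hr0.ne', Real.log_exp]
    have hval : (∑ i, a1 i * β.1 i) + (∑ j, a2 j * β.2 j)
        - (∑ i, ∑ j, Pstar i j *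
            (C i j + (1 / lam) * Real.log (Pstar i j) - Real.log Nr / lam)) = V := by
      have e1 : (∑ i, a1 i * β.1 i) = ∑ i, ∑ j, Pstar i j * β.1 i := by
        refine Finset.sum_congr rfl fun i _ => ?_
        have : a1 i = ∑ j, Pstar i j := rfl
        rw [this, Finset.sum_mul]
      have e2 : (∑ j, a2 j * β.2 j) = ∑ i, ∑ j, Pstar i j * β.2 j := by
        rw [Finset.sum_comm]
        refine Finset.sum_congr rfl fun j _ => ?_
        have : a2 j = ∑ i, Pstar i j := rfl
        rw [this, Finset.sum_mul]
      rw [e1, e2, sum_split]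
      have per : ∀ i j, Pstar i j * β.1 i + Pstar i j * β.2 j
          - Pstar i j * (C i j + (1 / lam) * Real.log (Pstar i j) - Real.log Nr / lam)
          = ((1 + Real.log r) / lam) * Pstar i j := by
        intro i j
        have hl : (1:ℝ)/lam * lam = 1 := one_div_mul_cancel hlam.ne'
        rw [hlogP i j]
        linear_combination (-(Pstar i j * (β.1 i + β.2 j - C i j))) * hl
      simp_rw [per, ← Finset.mul_sum]
      rw [hmassP]
      rw [hV, hr]
      split_ifs with hc
      · rw [Real.log_one]
        ring
      · have hSpos : 0 < S := lt_trans one_pos (lt_of_not_ge hc)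
        rw [div_mul_cancel₀ Nr hSpos.ne']
        ring
    linarith
end

section
/- The function β ↦ MK*_{λ,≤N}(β), defined piecewise as (N/λ)⟨q_λ(β),1⟩ when ⟨q_λ(β),1⟩ ≤ 1 and as (N/λ)log⟨q_λ(β),1⟩ + N/λ when ⟨q_λ(β),1⟩ ≥ 1 with q_λ(β) = exp(λ(Lβ−c)−1), is continuously differentiable on ℝ^{2M}, with gradient N·Lᵀq_λ(β) in the first region and N·Lᵀq_λ(β)/⟨q_λ(β),1⟩ in the second. -/
open scoped BigOperators Classical


/-- The dual Sinkhorn cost `MK*_{λ,≤N}` as a function of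
`β ∈ ℝ^{2M} ≃ EuclideanSpace ℝ (Fin M ⊕ Fin M)`. -/
noncomputable def MKstarLeN (M : ℕ) (lam Nr : ℝ) (C : Matrix (Fin M) (Fin M) ℝ)
    (β : EuclideanSpace ℝ (Fin M ⊕ Fin M)) : ℝ :=
  letI S : ℝ := ∑ i, ∑ j,
    Real.exp (lam * (β (Sum.inl i) + β (Sum.inr j) - C i j) - 1)
  if S ≤ 1 then (Nr / lam) * S else (Nr / lam) * Real.log S + Nr / lam

/-- Its gradient `N · Lᵀ q_λ(β)` in the region `⟨q_λ(β),1⟩ ≤ 1`, and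
`N · Lᵀ q_λ(β) / ⟨q_λ(β),1⟩` otherwise. -/
noncomputable def MKstarGrad (M : ℕ) (lam Nr : ℝ) (C : Matrix (Fin M) (Fin M) ℝ)
    (β : EuclideanSpace ℝ (Fin M ⊕ Fin M)) : EuclideanSpace ℝ (Fin M ⊕ Fin M) :=
  letI q : Fin M → Fin M → ℝ := fun i j =>
    Real.exp (lam * (β (Sum.inl i) + β (Sum.inr j) - C i j) - 1)
  letI S : ℝ := ∑ i, ∑ j, q i j
  WithLp.toLp 2 fun idx =>
    match idx with
    | Sum.inl i => if S ≤ 1 then Nr * ∑ j, q i j else Nr * (∑ j, q i j) / S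
    | Sum.inr j => if S ≤ 1 then Nr * ∑ i, q i j else Nr * (∑ i, q i j) / S

noncomputable def phiAux (t : ℝ) : ℝ := if t ≤ 1 then t else Real.log t + 1

lemma phiAux_eq (t : ℝ) : phiAux t = 1 + ∫ s in (1:ℝ)..t, (max s 1)⁻¹ := by
  unfold phiAux
  rcases le_or_gt t 1 with ht | ht
  · rw [if_pos ht]
    have h1 : ∫ s in (1:ℝ)..t, (max s 1)⁻¹ = ∫ s in (1:ℝ)..t, (1:ℝ) := by
      apply intervalIntegral.integral_congr
      intro s hs
      rw [Set.uIcc_of_ge ht] at hs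
      simp [max_eq_right hs.2]
    rw [h1]; simp
  · rw [if_neg (not_le.2 ht)]
    have h1 : ∫ s in (1:ℝ)..t, (max s 1)⁻¹ = ∫ s in (1:ℝ)..t, s⁻¹ := by
      apply intervalIntegral.integral_congr
      intro s hs
      rw [Set.uIcc_of_le ht.le] at hs
      show (max s 1)⁻¹ = s⁻¹
      rw [max_eq_left hs.1]
    rw [h1, integral_inv_of_pos one_pos (lt_trans one_pos ht), div_one]
    ring

lemma phiAux_hasDerivAt (t : ℝ) : HasDerivAt phiAux (max t 1)⁻¹ t := by
  have hc : Continuous fun s : ℝ => (max s 1)⁻¹ := by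
    exact (continuous_id.max continuous_const).inv₀ fun s =>
      ne_of_gt (lt_of_lt_of_le one_pos (le_max_right s 1))
  have h := intervalIntegral.integral_hasDerivAt_right
    (hc.intervalIntegrable 1 t)
    (hc.aestronglyMeasurable.stronglyMeasurableAtFilter)
    hc.continuousAt
  have he : phiAux = fun u => 1 + ∫ s in (1:ℝ)..u, (max s 1)⁻¹ := funext phiAux_eq
  rw [he]
  exact h.const_add 1

variable (M : ℕ) (lam : ℝ) (C : Matrix (Fin M) (Fin M) ℝ)

noncomputable def qF (β : EuclideanSpace ℝ (Fin M ⊕ Fin M)) (i j : Fin M) : ℝ :=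
  Real.exp (lam * (β (Sum.inl i) + β (Sum.inr j) - C i j) - 1)

noncomputable def SF (β : EuclideanSpace ℝ (Fin M ⊕ Fin M)) : ℝ :=
  ∑ i, ∑ j, qF M lam C β i j

lemma MKstarLeN_eq (Nr : ℝ) (β : EuclideanSpace ℝ (Fin M ⊕ Fin M)) :
    MKstarLeN M lam Nr C β = (Nr / lam) * phiAux (SF M lam C β) := by
  show (if SF M lam C β ≤ 1 then (Nr / lam) * SF M lam C β
      else (Nr / lam) * Real.log (SF M lam C β) + Nr / lam) = _
  unfold phiAux
  split <;> ring

lemma MKstarGrad_eq (Nr : ℝ) (β : EuclideanSpace ℝ (Fin M ⊕ Fin M)) :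
    MKstarGrad M lam Nr C β = WithLp.toLp 2 fun idx =>
      match idx with
      | Sum.inl i => Nr * (∑ j, qF M lam C β i j) / max (SF M lam C β) 1
      | Sum.inr j => Nr * (∑ i, qF M lam C β i j) / max (SF M lam C β) 1 := by
  show WithLp.toLp 2 _ = WithLp.toLp 2 _
  congr 1
  funext idx
  rcases le_or_gt (SF M lam C β) 1 with h | h
  · rw [show max (SF M lam C β) 1 = 1 from max_eq_right h] at *
    cases idx with
    | inl i =>
        show (if SF M lam C β ≤ 1 then Nr * ∑ j, qF M lam C β i j
          else Nr * (∑ j, qF M lam C β i j) / SF M lam C β) = _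
        rw [if_pos h]; simp
    | inr j =>
        show (if SF M lam C β ≤ 1 then Nr * ∑ i, qF M lam C β i j
          else Nr * (∑ i, qF M lam C β i j) / SF M lam C β) = _
        rw [if_pos h]; simp
  · rw [show max (SF M lam C β) 1 = SF M lam C β from max_eq_left h.le] at *
    cases idx with
    | inl i =>
        show (if SF M lam C β ≤ 1 then Nr * ∑ j, qF M lam C β i j
          else Nr * (∑ j, qF M lam C β i j) / SF M lam C β) = _
        rw [if_neg (not_le.2 h)]
    | inr j =>
        show (if SF M lam C β ≤ 1 then Nr * ∑ i, qF M lam C β i j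
          else Nr * (∑ i, qF M lam C β i j) / SF M lam C β) = _
        rw [if_neg (not_le.2 h)]

noncomputable def DF (β : EuclideanSpace ℝ (Fin M ⊕ Fin M)) :
    EuclideanSpace ℝ (Fin M ⊕ Fin M) →L[ℝ] ℝ :=
  ∑ i, ∑ j, qF M lam C β i j •
    (lam • (EuclideanSpace.proj (Sum.inl i) + EuclideanSpace.proj (Sum.inr j) :
      EuclideanSpace ℝ (Fin M ⊕ Fin M) →L[ℝ] ℝ))

lemma SF_hasFDerivAt (β : EuclideanSpace ℝ (Fin M ⊕ Fin M)) :
    HasFDerivAt (SF M lam C) (DF M lam C β) β := by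
  unfold SF DF
  refine HasFDerivAt.fun_sum fun i _ => HasFDerivAt.fun_sum fun j _ => ?_
  have h1 : HasFDerivAt (fun γ : EuclideanSpace ℝ (Fin M ⊕ Fin M) =>
      γ (Sum.inl i) + γ (Sum.inr j) - C i j)
      ((EuclideanSpace.proj (Sum.inl i) + EuclideanSpace.proj (Sum.inr j) :
        EuclideanSpace ℝ (Fin M ⊕ Fin M) →L[ℝ] ℝ)) β :=
    by
      have hco : ∀ idx : Fin M ⊕ Fin M,
          (⇑(EuclideanSpace.proj idx : EuclideanSpace ℝ (Fin M ⊕ Fin M) →L[ℝ] ℝ))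
            = fun γ : EuclideanSpace ℝ (Fin M ⊕ Fin M) => γ idx := by
        intro idx; funext γ; simp
      have hpi : HasFDerivAt (fun γ : EuclideanSpace ℝ (Fin M ⊕ Fin M) => γ (Sum.inl i))
          (EuclideanSpace.proj (Sum.inl i) : EuclideanSpace ℝ (Fin M ⊕ Fin M) →L[ℝ] ℝ) β := by
        rw [← hco (Sum.inl i)]; exact (EuclideanSpace.proj (Sum.inl i) : EuclideanSpace ℝ (Fin M ⊕ Fin M) →L[ℝ] ℝ).hasFDerivAt
      have hpj : HasFDerivAt (fun γ : EuclideanSpace ℝ (Fin M ⊕ Fin M) => γ (Sum.inr j))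
          (EuclideanSpace.proj (Sum.inr j) : EuclideanSpace ℝ (Fin M ⊕ Fin M) →L[ℝ] ℝ) β := by
        rw [← hco (Sum.inr j)]; exact (EuclideanSpace.proj (Sum.inr j) : EuclideanSpace ℝ (Fin M ⊕ Fin M) →L[ℝ] ℝ).hasFDerivAt
      exact (hpi.add hpj).sub_const _
  have h2 := (h1.const_mul lam).sub_const 1
  exact h2.exp

lemma main_hasGradientAt (hlam : 0 < lam) (Nr : ℝ) (β : EuclideanSpace ℝ (Fin M ⊕ Fin M)) :
    HasGradientAt (MKstarLeN M lam Nr C) (MKstarGrad M lam Nr C β) β := by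
  have hS := SF_hasFDerivAt M lam C β
  have hφ := (phiAux_hasDerivAt (SF M lam C β)).const_mul (Nr / lam)
  have hF : HasFDerivAt (MKstarLeN M lam Nr C)
      (((Nr / lam) * (max (SF M lam C β) 1)⁻¹) • DF M lam C β) β := by
    have he : MKstarLeN M lam Nr C = (fun t => (Nr / lam) * phiAux t) ∘ (SF M lam C) :=
      funext fun γ => MKstarLeN_eq M lam C Nr γ
    rw [he]
    exact hφ.comp_hasFDerivAt β hS
  rw [hasGradientAt_iff_hasFDerivAt]
  refine hF.congr_fderiv ?_
  symm
  apply ContinuousLinearMap.ext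
  intro v
  rw [MKstarGrad_eq]
  simp only [InnerProductSpace.toDual_apply_apply, PiLp.toLp_apply, PiLp.inner_apply, RCLike.inner_apply,
    starRingEnd_apply, star_trivial, DF, ContinuousLinearMap.smul_apply,
    ContinuousLinearMap.coe_sum', Finset.sum_apply, ContinuousLinearMap.add_apply,
    ContinuousLinearMap.coe_smul', Pi.smul_apply, PiLp.proj_apply,
    Fintype.sum_sum_type, smul_eq_mul]
  have hlam' : lam ≠ 0 := ne_of_gt hlam
  have hmS : (SF M lam C β ⊔ 1) ≠ 0 :=
    ne_of_gt (lt_of_lt_of_le one_pos (le_max_right _ _))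
  simp only [Finset.sum_div, Finset.sum_mul, Finset.mul_sum, mul_add, Finset.sum_add_distrib]
  congr 1
  · refine Finset.sum_congr rfl fun i _ => Finset.sum_congr rfl fun j _ => ?_
    field_simp
  · rw [Finset.sum_comm]
    refine Finset.sum_congr rfl fun i _ => Finset.sum_congr rfl fun j _ => ?_
    field_simp

lemma qF_continuous (i j : Fin M) : Continuous fun β => qF M lam C β i j := by
  apply Real.continuous_exp.comp
  apply Continuous.sub _ continuous_const
  apply continuous_const.mul
  apply Continuous.sub _ continuous_const
  exact ((EuclideanSpace.proj (Sum.inl i) :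
      EuclideanSpace ℝ (Fin M ⊕ Fin M) →L[ℝ] ℝ).continuous).add
    ((EuclideanSpace.proj (Sum.inr j) :
      EuclideanSpace ℝ (Fin M ⊕ Fin M) →L[ℝ] ℝ).continuous)

lemma SF_continuous : Continuous (SF M lam C) := by
  unfold SF
  exact continuous_finset_sum _ fun i _ => continuous_finset_sum _ fun j _ =>
    qF_continuous M lam C i j

lemma grad_continuous (Nr : ℝ) : Continuous fun β => MKstarGrad M lam Nr C β := by
  have he : (fun β => MKstarGrad M lam Nr C β) =
      (WithLp.equiv 2 ((Fin M ⊕ Fin M) → ℝ)).symm ∘ fun β idx =>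
        match idx with
        | Sum.inl i => Nr * (∑ j, qF M lam C β i j) / max (SF M lam C β) 1
        | Sum.inr j => Nr * (∑ i, qF M lam C β i j) / max (SF M lam C β) 1 := by
    funext β
    exact MKstarGrad_eq M lam C Nr β
  rw [he]
  refine (PiLp.continuous_toLp 2 _).comp ?_
  apply continuous_pi
  intro idx
  have hmax : Continuous fun β => max (SF M lam C β) 1 :=
    (SF_continuous M lam C).max continuous_const
  have hne : ∀ β, max (SF M lam C β) 1 ≠ 0 := fun β =>
    ne_of_gt (lt_of_lt_of_le one_pos (le_max_right _ _))
  cases idx with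
  | inl i =>
      exact (continuous_const.mul
        (continuous_finset_sum _ fun j _ => qF_continuous M lam C i j)).div hmax hne
  | inr j =>
      exact (continuous_const.mul
        (continuous_finset_sum _ fun i _ => qF_continuous M lam C i j)).div hmax hne

/-- `MK*_{λ,≤N}` is continuously differentiable on `ℝ^{2M}`
with the gradient given above. -/
theorem stmt_11 (M : ℕ) (lam Nr : ℝ) (hlam : 0 < lam) (hN : 0 < Nr)
    (C : Matrix (Fin M) (Fin M) ℝ) :
    ContDiff ℝ 1 (MKstarLeN M lam Nr C) ∧
    ∀ β : EuclideanSpace ℝ (Fin M ⊕ Fin M),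
      HasGradientAt (MKstarLeN M lam Nr C) (MKstarGrad M lam Nr C β) β := by
  refine ⟨?_, fun β => main_hasGradientAt M lam C hlam Nr β⟩
  rw [contDiff_one_iff_fderiv]
  refine ⟨fun β => (main_hasGradientAt M lam C hlam Nr β).hasFDerivAt.differentiableAt, ?_⟩
  have hfd : fderiv ℝ (MKstarLeN M lam Nr C) = fun β =>
      (InnerProductSpace.toDual ℝ (EuclideanSpace ℝ (Fin M ⊕ Fin M)))
        (MKstarGrad M lam Nr C β) :=
    funext fun β => (main_hasGradientAt M lam C hlam Nr β).hasFDerivAt.fderiv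
  rw [hfd]
  exact (InnerProductSpace.toDual ℝ
    (EuclideanSpace ℝ (Fin M ⊕ Fin M))).continuous.comp (grad_continuous M lam C Nr)
end

section
/- The gradient of MK*_{λ,≤N} is Lipschitz continuous on ℝ^{2M} with Lipschitz constant at most 2λN. -/
open scoped BigOperators Classical

namespace Stmt12

open Real Filter Set Topology
open scoped RealInnerProductSpace

noncomputable def dphi (x : ℝ) : ℝ := (max x 1)⁻¹

noncomputable def phi (x : ℝ) : ℝ := if x ≤ 1 then x else Real.log x + 1

lemma dphi_of_le {x : ℝ} (h : x ≤ 1) : dphi x = 1 := by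
  simp [dphi, max_eq_right h]

lemma dphi_of_ge {x : ℝ} (h : 1 ≤ x) : dphi x = x⁻¹ := by
  simp [dphi, max_eq_left h]

lemma continuous_dphi : Continuous dphi := by
  apply Continuous.inv₀ (continuous_id.max continuous_const)
  intro x h
  have h1 : (1:ℝ) ≤ max x 1 := le_max_right _ _
  rw [show max x 1 = id x ⊔ 1 from rfl] at h1
  rw [h] at h1; norm_num at h1

lemma hasDerivAt_phi {x : ℝ} (hx : 0 < x ∨ x < 1) : HasDerivAt phi (dphi x) x := by
  rcases lt_trichotomy x 1 with h | rfl | h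
  · rw [dphi_of_le h.le]
    apply (hasDerivAt_id x).congr_of_eventuallyEq
    filter_upwards [Iio_mem_nhds h] with y hy
    simp [phi, le_of_lt (mem_Iio.mp hy)]
  · rw [dphi_of_le le_rfl]
    have h1 : HasDerivWithinAt phi 1 (Iic 1) 1 := by
      refine (hasDerivAt_id (1:ℝ)).hasDerivWithinAt.congr (fun y hy => ?_) ?_
      · simp only [phi, if_pos (mem_Iic.mp hy), id_eq]
      · simp [phi]
    have h2 : HasDerivWithinAt phi 1 (Ici 1) 1 := by
      have hl : HasDerivAt (fun y : ℝ => Real.log y + 1) 1 1 := by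
        simpa using (Real.hasDerivAt_log one_ne_zero).add_const 1
      refine hl.hasDerivWithinAt.congr (fun y hy => ?_) (by simp [phi])
      by_cases hy1 : y ≤ 1
      · have hy' : y = 1 := le_antisymm hy1 (mem_Ici.mp hy)
        simp [phi, hy']
      · simp [phi, hy1]
    have h3 := h1.union h2
    rwa [Iic_union_Ici, hasDerivWithinAt_univ] at h3
  · have hx0 : 0 < x := by
      rcases hx with h0 | h1
      · exact h0
      · linarith
    rw [dphi_of_ge h.le]
    have hl : HasDerivAt (fun y : ℝ => Real.log y + 1) x⁻¹ x :=
      (Real.hasDerivAt_log (ne_of_gt hx0)).add_const 1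
    apply hl.congr_of_eventuallyEq
    filter_upwards [Ioi_mem_nhds h] with y hy
    simp [phi, not_le.mpr (mem_Ioi.mp hy)]


variable {M : ℕ}

local notation "E" => EuclideanSpace ℝ (Fin M ⊕ Fin M)

noncomputable def qb (lam : ℝ) (C : Matrix (Fin M) (Fin M) ℝ) (β : E)
    (p : Fin M × Fin M) : ℝ :=
  Real.exp (lam * (β (Sum.inl p.1) + β (Sum.inr p.2) - C p.1 p.2) - 1)

noncomputable def Sb (lam : ℝ) (C : Matrix (Fin M) (Fin M) ℝ) (β : E) : ℝ :=
  ∑ p, qb lam C β p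

lemma qb_pos (lam : ℝ) (C : Matrix (Fin M) (Fin M) ℝ) (β : E) (p : Fin M × Fin M) :
    0 < qb lam C β p := Real.exp_pos _

lemma Sb_eq (lam : ℝ) (C : Matrix (Fin M) (Fin M) ℝ) (β : E) :
    Sb lam C β = ∑ i, ∑ j,
      Real.exp (lam * (β (Sum.inl i) + β (Sum.inr j) - C i j) - 1) := by
  rw [Sb, Fintype.sum_prod_type]; rfl

lemma Sb_nonneg (lam : ℝ) (C : Matrix (Fin M) (Fin M) ℝ) (β : E) :
    0 ≤ Sb lam C β :=
  Finset.sum_nonneg fun p _ => (qb_pos lam C β p).le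

lemma grad_inl (lam Nr : ℝ) (C : Matrix (Fin M) (Fin M) ℝ) (β : E) (i : Fin M) :
    MKstarGrad M lam Nr C β (Sum.inl i)
      = Nr * Stmt12.dphi (Sb lam C β) * ∑ j, qb lam C β (i, j) := by
  have hS : Sb lam C β = ∑ i, ∑ j,
      Real.exp (lam * (β (Sum.inl i) + β (Sum.inr j) - C i j) - 1) := Sb_eq lam C β
  show (if (∑ i, ∑ j, Real.exp (lam * (β (Sum.inl i) + β (Sum.inr j) - C i j) - 1)) ≤ 1
      then Nr * ∑ j, Real.exp (lam * (β (Sum.inl i) + β (Sum.inr j) - C i j) - 1)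
      else Nr * (∑ j, Real.exp (lam * (β (Sum.inl i) + β (Sum.inr j) - C i j) - 1)) /
        (∑ i, ∑ j, Real.exp (lam * (β (Sum.inl i) + β (Sum.inr j) - C i j) - 1))) = _
  rw [← hS]
  by_cases h : Sb lam C β ≤ 1
  · rw [if_pos h, dphi_of_le h]
    simp [qb]
  · rw [if_neg h, dphi_of_ge (le_of_lt (not_le.mp h))]
    have h0 : Sb lam C β ≠ 0 := by
      have := not_le.mp h; intro hc; rw [hc] at this; norm_num at this
    field_simp [qb]
    rfl

lemma grad_inr (lam Nr : ℝ) (C : Matrix (Fin M) (Fin M) ℝ) (β : E) (j : Fin M) :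
    MKstarGrad M lam Nr C β (Sum.inr j)
      = Nr * Stmt12.dphi (Sb lam C β) * ∑ i, qb lam C β (i, j) := by
  have hS : Sb lam C β = ∑ i, ∑ j,
      Real.exp (lam * (β (Sum.inl i) + β (Sum.inr j) - C i j) - 1) := Sb_eq lam C β
  show (if (∑ i, ∑ j, Real.exp (lam * (β (Sum.inl i) + β (Sum.inr j) - C i j) - 1)) ≤ 1
      then Nr * ∑ i, Real.exp (lam * (β (Sum.inl i) + β (Sum.inr j) - C i j) - 1)
      else Nr * (∑ i, Real.exp (lam * (β (Sum.inl i) + β (Sum.inr j) - C i j) - 1)) /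
        (∑ i, ∑ j, Real.exp (lam * (β (Sum.inl i) + β (Sum.inr j) - C i j) - 1))) = _
  rw [← hS]
  by_cases h : Sb lam C β ≤ 1
  · rw [if_pos h, dphi_of_le h]
    simp [qb]
  · rw [if_neg h, dphi_of_ge (le_of_lt (not_le.mp h))]
    have h0 : Sb lam C β ≠ 0 := by
      have := not_le.mp h; intro hc; rw [hc] at this; norm_num at this
    field_simp [qb]
    rfl

/-- inner product formula for the gradient. -/
lemma inner_grad (lam Nr : ℝ) (C : Matrix (Fin M) (Fin M) ℝ) (β u : E) :
    ⟪(MKstarGrad M lam Nr C β : E), u⟫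
      = Nr * Stmt12.dphi (Sb lam C β)
        * ∑ p : Fin M × Fin M, qb lam C β p * (u (Sum.inl p.1) + u (Sum.inr p.2)) := by
  have : ⟪(MKstarGrad M lam Nr C β : E), u⟫
      = ∑ idx, MKstarGrad M lam Nr C β idx * u idx := by
    simp [PiLp.inner_apply, RCLike.inner_apply, conj_trivial, mul_comm]
  rw [this, Fintype.sum_sum_type]
  simp only [grad_inl lam Nr C β, grad_inr lam Nr C β]
  have hs : ∀ p : Fin M × Fin M,
      qb lam C β p * (u (Sum.inl p.1) + u (Sum.inr p.2))
        = qb lam C β p * u (Sum.inl p.1) + qb lam C β p * u (Sum.inr p.2) := by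
    intro p; ring
  rw [Finset.mul_sum]
  simp only [hs, mul_add, Finset.sum_add_distrib]
  congr 1
  · rw [Fintype.sum_prod_type]
    apply Finset.sum_congr rfl
    intro i _
    rw [Finset.mul_sum, Finset.sum_mul]
    exact Finset.sum_congr rfl fun j _ => by ring
  · rw [Fintype.sum_prod_type_right]
    apply Finset.sum_congr rfl
    intro j _
    rw [Finset.mul_sum, Finset.sum_mul]
    exact Finset.sum_congr rfl fun i _ => by ring

/-- MKstarLeN as composition with phi. -/
lemma MK_eq_phi (lam Nr : ℝ) (C : Matrix (Fin M) (Fin M) ℝ) (β : E) :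
    MKstarLeN M lam Nr C β = (Nr / lam) * Stmt12.phi (Sb lam C β) := by
  show (if (∑ i, ∑ j, Real.exp (lam * (β (Sum.inl i) + β (Sum.inr j) - C i j) - 1)) ≤ 1
      then (Nr / lam) * (∑ i, ∑ j, Real.exp (lam * (β (Sum.inl i) + β (Sum.inr j) - C i j) - 1))
      else (Nr / lam) * Real.log (∑ i, ∑ j,
        Real.exp (lam * (β (Sum.inl i) + β (Sum.inr j) - C i j) - 1)) + Nr / lam) = _
  rw [← Sb_eq lam C β, Stmt12.phi]
  by_cases h : Sb lam C β ≤ 1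
  · rw [if_pos h, if_pos h]
  · rw [if_neg h, if_neg h]; ring

/-- derivative of Sb. -/
lemma hasFDerivAt_Sb (lam : ℝ) (C : Matrix (Fin M) (Fin M) ℝ) (β : E) :
    HasFDerivAt (Sb lam C)
      (∑ p : Fin M × Fin M, (lam * qb lam C β p) •
        (EuclideanSpace.proj (𝕜 := ℝ) (Sum.inl p.1 : Fin M ⊕ Fin M)
          + EuclideanSpace.proj (𝕜 := ℝ) (Sum.inr p.2 : Fin M ⊕ Fin M))) β := by
  apply HasFDerivAt.fun_sum
  intro p _
  have h1 : HasFDerivAt (fun β : E => lam * (β (Sum.inl p.1) + β (Sum.inr p.2) - C p.1 p.2) - 1)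
      (lam • (EuclideanSpace.proj (𝕜 := ℝ) (Sum.inl p.1 : Fin M ⊕ Fin M)
          + EuclideanSpace.proj (𝕜 := ℝ) (Sum.inr p.2 : Fin M ⊕ Fin M))) β := by
    apply HasFDerivAt.sub_const
    apply HasFDerivAt.const_mul
    apply HasFDerivAt.sub_const
    exact ((EuclideanSpace.proj (𝕜 := ℝ) (Sum.inl p.1 : Fin M ⊕ Fin M)).hasFDerivAt).add
      ((EuclideanSpace.proj (𝕜 := ℝ) (Sum.inr p.2 : Fin M ⊕ Fin M)).hasFDerivAt)
  have h2 := (Real.hasDerivAt_exp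
      (lam * (β (Sum.inl p.1) + β (Sum.inr p.2) - C p.1 p.2) - 1)).comp_hasFDerivAt β h1
  have h3 : qb lam C β p •
      (lam • (EuclideanSpace.proj (𝕜 := ℝ) (Sum.inl p.1 : Fin M ⊕ Fin M)
        + EuclideanSpace.proj (𝕜 := ℝ) (Sum.inr p.2 : Fin M ⊕ Fin M)))
      = (lam * qb lam C β p) •
        (EuclideanSpace.proj (𝕜 := ℝ) (Sum.inl p.1 : Fin M ⊕ Fin M)
          + EuclideanSpace.proj (𝕜 := ℝ) (Sum.inr p.2 : Fin M ⊕ Fin M)) := by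
    rw [smul_smul, mul_comm]
  rw [← h3]
  exact h2

lemma hasGradient (lam Nr : ℝ) (hlam : 0 < lam) (C : Matrix (Fin M) (Fin M) ℝ) (β : E) :
    HasGradientAt (MKstarLeN M lam Nr C) (MKstarGrad M lam Nr C β) β := by
  rw [hasGradientAt_iff_hasFDerivAt]
  have hMK : MKstarLeN M lam Nr C = fun β : E => (Nr / lam) * Stmt12.phi (Sb lam C β) :=
    funext (MK_eq_phi lam Nr C)
  rw [hMK]
  set DS := (∑ p : Fin M × Fin M, (lam * qb lam C β p) •
        (EuclideanSpace.proj (𝕜 := ℝ) (Sum.inl p.1 : Fin M ⊕ Fin M)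
          + EuclideanSpace.proj (𝕜 := ℝ) (Sum.inr p.2 : Fin M ⊕ Fin M))) with hDS
  have hphi : HasDerivAt Stmt12.phi (Stmt12.dphi (Sb lam C β)) (Sb lam C β) := by
    apply Stmt12.hasDerivAt_phi
    rcases eq_or_lt_of_le (Sb_nonneg lam C β) with h | h
    · right; rw [← h]; norm_num
    · left; exact h
  have h1 : HasFDerivAt (fun β : E => Stmt12.phi (Sb lam C β))
      (Stmt12.dphi (Sb lam C β) • DS) β :=
    hphi.comp_hasFDerivAt β (hasFDerivAt_Sb lam C β)
  have h2 := h1.const_mul (Nr / lam)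
  have h3 : ((Nr / lam) • (Stmt12.dphi (Sb lam C β) • DS))
      = (InnerProductSpace.toDual ℝ E) (MKstarGrad M lam Nr C β) := by
    apply ContinuousLinearMap.ext
    intro v
    rw [InnerProductSpace.toDual_apply_apply, inner_grad lam Nr C β v]
    have hDSv : DS v = lam * ∑ p : Fin M × Fin M,
        qb lam C β p * (v (Sum.inl p.1) + v (Sum.inr p.2)) := by
      rw [hDS, ContinuousLinearMap.sum_apply, Finset.mul_sum]
      apply Finset.sum_congr rfl
      intro p _
      rw [ContinuousLinearMap.smul_apply, ContinuousLinearMap.add_apply]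
      simp [PiLp.proj_apply]
      ring
    rw [ContinuousLinearMap.smul_apply, ContinuousLinearMap.smul_apply, hDSv]
    rw [smul_eq_mul, smul_eq_mul]
    field_simp
  rw [← h3]
  exact h2


section Ineq

lemma cs_abs {ι : Type*} [Fintype ι] (q v w : ι → ℝ) (hq : ∀ p, 0 ≤ q p) :
    |∑ p, q p * (v p * w p)|
      ≤ Real.sqrt (∑ p, q p * v p ^ 2) * Real.sqrt (∑ p, q p * w p ^ 2) := by
  have key : (∑ p, q p * (v p * w p)) ^ 2
      ≤ (∑ p, q p * v p ^ 2) * (∑ p, q p * w p ^ 2) := by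
    have h := Finset.sum_mul_sq_le_sq_mul_sq Finset.univ
      (fun p => Real.sqrt (q p) * v p) (fun p => Real.sqrt (q p) * w p)
    have e1 : ∀ p : ι, (Real.sqrt (q p) * v p) * (Real.sqrt (q p) * w p)
        = q p * (v p * w p) := by
      intro p
      have h' : Real.sqrt (q p) * Real.sqrt (q p) = q p := Real.mul_self_sqrt (hq p)
      linear_combination (v p * w p) * h'
    have e2 : ∀ p : ι, (Real.sqrt (q p) * v p) ^ 2 = q p * v p ^ 2 := by
      intro p
      rw [mul_pow, Real.sq_sqrt (hq p)]
    have e3 : ∀ p : ι, (Real.sqrt (q p) * w p) ^ 2 = q p * w p ^ 2 := by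
      intro p
      rw [mul_pow, Real.sq_sqrt (hq p)]
    simpa only [e1, e2, e3] using h
  have h1 : |∑ p, q p * (v p * w p)| = Real.sqrt ((∑ p, q p * (v p * w p)) ^ 2) :=
    (Real.sqrt_sq_eq_abs _).symm
  have hv : 0 ≤ ∑ p, q p * v p ^ 2 :=
    Finset.sum_nonneg fun p _ => mul_nonneg (hq p) (sq_nonneg _)
  rw [h1, ← Real.sqrt_mul hv]
  exact Real.sqrt_le_sqrt key

lemma cov_abs {ι : Type*} [Fintype ι] (q v w : ι → ℝ) (hq : ∀ p, 0 ≤ q p)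
    (h1 : ∑ p, q p = 1) :
    |∑ p, q p * (v p * w p) - (∑ p, q p * v p) * (∑ p, q p * w p)|
      ≤ Real.sqrt (∑ p, q p * v p ^ 2) * Real.sqrt (∑ p, q p * w p ^ 2) := by
  set vb := ∑ p, q p * v p with hvb
  set wb := ∑ p, q p * w p with hwb
  have key : ∑ p, q p * ((v p - vb) * (w p - wb))
      = ∑ p, q p * (v p * w p) - vb * wb := by
    have e : ∀ p : ι, q p * ((v p - vb) * (w p - wb))
        = q p * (v p * w p) - wb * (q p * v p) - vb * (q p * w p) + (vb * wb) * q p := by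
      intro p; ring
    rw [Finset.sum_congr rfl fun p _ => e p]
    rw [Finset.sum_add_distrib, Finset.sum_sub_distrib, Finset.sum_sub_distrib,
      ← Finset.mul_sum, ← Finset.mul_sum, ← Finset.mul_sum, ← hvb, ← hwb, h1]
    ring
  have hvar : ∀ (x : ι → ℝ) (xb : ℝ), xb = ∑ p, q p * x p →
      ∑ p, q p * (x p - xb) ^ 2 ≤ ∑ p, q p * x p ^ 2 := by
    intro x xb hxb
    have e : ∀ p : ι, q p * (x p - xb) ^ 2
        = q p * x p ^ 2 - 2 * xb * (q p * x p) + xb ^ 2 * q p := by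
      intro p; ring
    rw [Finset.sum_congr rfl fun p _ => e p]
    rw [Finset.sum_add_distrib, Finset.sum_sub_distrib, ← Finset.mul_sum, ← Finset.mul_sum,
      ← hxb, h1]
    nlinarith [sq_nonneg xb]
  calc |∑ p, q p * (v p * w p) - vb * wb|
      = |∑ p, q p * ((v p - vb) * (w p - wb))| := by rw [key]
    _ ≤ Real.sqrt (∑ p, q p * (v p - vb) ^ 2) * Real.sqrt (∑ p, q p * (w p - wb) ^ 2) :=
        cs_abs q _ _ hq
    _ ≤ Real.sqrt (∑ p, q p * v p ^ 2) * Real.sqrt (∑ p, q p * w p ^ 2) := by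
        apply mul_le_mul
        · exact Real.sqrt_le_sqrt (hvar v vb hvb)
        · exact Real.sqrt_le_sqrt (hvar w wb hwb)
        · exact Real.sqrt_nonneg _
        · exact Real.sqrt_nonneg _

lemma marginal_bound {M : ℕ} (q : Fin M × Fin M → ℝ) (hq : ∀ p, 0 ≤ q p)
    (hrow : ∀ i, ∑ j, q (i, j) ≤ 1) (hcol : ∀ j, ∑ i, q (i, j) ≤ 1)
    (x y : Fin M → ℝ) :
    ∑ p, q p * (x p.1 + y p.2) ^ 2 ≤ 2 * ((∑ i, x i ^ 2) + ∑ j, y j ^ 2) := by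
  have step1 : ∑ p, q p * (x p.1 + y p.2) ^ 2
      ≤ ∑ p, q p * (2 * x p.1 ^ 2 + 2 * y p.2 ^ 2) := by
    apply Finset.sum_le_sum
    intro p _
    apply mul_le_mul_of_nonneg_left _ (hq p)
    nlinarith [sq_nonneg (x p.1 - y p.2)]
  have step2 : ∑ p, q p * (2 * x p.1 ^ 2 + 2 * y p.2 ^ 2)
      = 2 * ((∑ i, (∑ j, q (i, j)) * x i ^ 2) + ∑ j, (∑ i, q (i, j)) * y j ^ 2) := by
    simp only [mul_add, Finset.sum_add_distrib, Fintype.sum_prod_type]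
    congr 1
    · rw [Finset.mul_sum]
      apply Finset.sum_congr rfl
      intro i _
      rw [← Finset.sum_mul]
      ring
    · rw [Finset.sum_comm, Finset.mul_sum]
      apply Finset.sum_congr rfl
      intro j _
      rw [← Finset.sum_mul]
      ring
  have step3 : (∑ i, (∑ j, q (i, j)) * x i ^ 2) + ∑ j, (∑ i, q (i, j)) * y j ^ 2
      ≤ (∑ i, x i ^ 2) + ∑ j, y j ^ 2 := by
    apply add_le_add
    · apply Finset.sum_le_sum
      intro i _
      exact mul_le_of_le_one_left (sq_nonneg _) (hrow i)
    · apply Finset.sum_le_sum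
      intro j _
      exact mul_le_of_le_one_left (sq_nonneg _) (hcol j)
  calc ∑ p, q p * (x p.1 + y p.2) ^ 2
      ≤ ∑ p, q p * (2 * x p.1 ^ 2 + 2 * y p.2 ^ 2) := step1
    _ = 2 * ((∑ i, (∑ j, q (i, j)) * x i ^ 2) + ∑ j, (∑ i, q (i, j)) * y j ^ 2) := step2
    _ ≤ 2 * ((∑ i, x i ^ 2) + ∑ j, y j ^ 2) := by linarith

end Ineq

lemma norm_sq_split {M : ℕ} (d : EuclideanSpace ℝ (Fin M ⊕ Fin M)) :
    ‖d‖ ^ 2 = (∑ i, d (Sum.inl i) ^ 2) + ∑ j, d (Sum.inr j) ^ 2 := by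
  rw [EuclideanSpace.norm_eq, Real.sq_sqrt (by positivity)]
  rw [Fintype.sum_sum_type]
  simp [Real.norm_eq_abs, sq_abs]

/-- combined square-root bound: if `∑ q v² ≤ 2 A` and `∑ q w² ≤ 2 B` with `A B ≥ 0` then
`√(∑ q v²) √(∑ q w²) ≤ 2 √A √B`. -/
lemma sqrt_bound {a b A B : ℝ} (hA : 0 ≤ A) (hB : 0 ≤ B)
    (ha : a ≤ 2 * A ^ 2) (hb : b ≤ 2 * B ^ 2) :
    Real.sqrt a * Real.sqrt b ≤ 2 * A * B := by
  have h1 : Real.sqrt a ≤ Real.sqrt 2 * A := by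
    have : Real.sqrt a ≤ Real.sqrt (2 * A ^ 2) := Real.sqrt_le_sqrt ha
    rwa [Real.sqrt_mul (by norm_num) (A ^ 2), Real.sqrt_sq hA] at this
  have h2 : Real.sqrt b ≤ Real.sqrt 2 * B := by
    have : Real.sqrt b ≤ Real.sqrt (2 * B ^ 2) := Real.sqrt_le_sqrt hb
    rwa [Real.sqrt_mul (by norm_num) (B ^ 2), Real.sqrt_sq hB] at this
  have h3 : Real.sqrt a * Real.sqrt b ≤ (Real.sqrt 2 * A) * (Real.sqrt 2 * B) := by
    apply mul_le_mul h1 h2 (Real.sqrt_nonneg _)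
    positivity
  have h4 : (Real.sqrt 2 * A) * (Real.sqrt 2 * B) = 2 * A * B := by
    have h' : Real.sqrt 2 * Real.sqrt 2 = 2 := Real.mul_self_sqrt (by norm_num)
    linear_combination (A * B) * h'
  linarith

/-- mean value style bound from right-derivatives. -/
lemma mvt_right {f : ℝ → ℝ} {K : ℝ}
    (hf : ContinuousOn f (Icc 0 1))
    (H : ∀ x ∈ Ico (0:ℝ) 1, ∃ y, HasDerivWithinAt f y (Ici x) x ∧ |y| ≤ K) :
    |f 1 - f 0| ≤ K := by
  choose! y hy hb using H
  have h := norm_image_sub_le_of_norm_deriv_right_le_segment hf hy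
    (fun x hx => by simpa [Real.norm_eq_abs] using hb x hx) 1 (right_mem_Icc.mpr zero_le_one)
  simpa [Real.norm_eq_abs] using h


section Line

variable (lam Nr : ℝ) (C : Matrix (Fin M) (Fin M) ℝ)
variable (b d u : EuclideanSpace ℝ (Fin M ⊕ Fin M))

/-- value of `q` along the segment `b + t • d`. -/
noncomputable def qt (t : ℝ) (p : Fin M × Fin M) : ℝ :=
  Real.exp ((lam * (b (Sum.inl p.1) + b (Sum.inr p.2) - C p.1 p.2) - 1)
    + t * (lam * (d (Sum.inl p.1) + d (Sum.inr p.2))))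

noncomputable def St (t : ℝ) : ℝ := ∑ p, qt lam C b d t p

noncomputable def Tt (t : ℝ) : ℝ :=
  ∑ p, qt lam C b d t p * (u (Sum.inl p.1) + u (Sum.inr p.2))

noncomputable def ht (t : ℝ) : ℝ :=
  Nr * Stmt12.dphi (St lam C b d t) * Tt lam C b d u t

lemma qt_nonneg (t : ℝ) (p : Fin M × Fin M) : 0 ≤ qt lam C b d t p :=
  (Real.exp_pos _).le

lemma qt_zero (p : Fin M × Fin M) : qt lam C b d 0 p = qb lam C b p := by
  simp [qt, qb]

lemma qt_one (β : EuclideanSpace ℝ (Fin M ⊕ Fin M)) (p : Fin M × Fin M) : qt lam C b (β - b) 1 p = qb lam C β p := by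
  rw [qt, qb]
  congr 1
  have h1 : (β - b) (Sum.inl p.1) = β (Sum.inl p.1) - b (Sum.inl p.1) := rfl
  have h2 : (β - b) (Sum.inr p.2) = β (Sum.inr p.2) - b (Sum.inr p.2) := rfl
  rw [h1, h2]; ring

lemma St_zero : St lam C b d 0 = Sb lam C b := by
  rw [St, Sb]; exact Finset.sum_congr rfl fun p _ => qt_zero lam C b d p

lemma St_one (β : EuclideanSpace ℝ (Fin M ⊕ Fin M)) : St lam C b (β - b) 1 = Sb lam C β := by
  rw [St, Sb]; exact Finset.sum_congr rfl fun p _ => qt_one lam C b β p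

lemma Tt_zero : Tt lam C b d u 0
    = ∑ p, qb lam C b p * (u (Sum.inl p.1) + u (Sum.inr p.2)) := by
  rw [Tt]; exact Finset.sum_congr rfl fun p _ => by rw [qt_zero]

lemma Tt_one (β : EuclideanSpace ℝ (Fin M ⊕ Fin M)) : Tt lam C b (β - b) u 1
    = ∑ p, qb lam C β p * (u (Sum.inl p.1) + u (Sum.inr p.2)) := by
  rw [Tt]; exact Finset.sum_congr rfl fun p _ => by rw [qt_one]

lemma hasDerivAt_qt (t : ℝ) (p : Fin M × Fin M) :
    HasDerivAt (fun s => qt lam C b d s p)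
      (lam * (d (Sum.inl p.1) + d (Sum.inr p.2)) * qt lam C b d t p) t := by
  have h : HasDerivAt (fun s : ℝ =>
      (lam * (b (Sum.inl p.1) + b (Sum.inr p.2) - C p.1 p.2) - 1)
        + s * (lam * (d (Sum.inl p.1) + d (Sum.inr p.2))))
      (lam * (d (Sum.inl p.1) + d (Sum.inr p.2))) t := by
    have h1 := ((hasDerivAt_id t).mul_const
      (lam * (d (Sum.inl p.1) + d (Sum.inr p.2)))).const_add
      (lam * (b (Sum.inl p.1) + b (Sum.inr p.2) - C p.1 p.2) - 1)
    rwa [one_mul] at h1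
  rw [show lam * (d (Sum.inl p.1) + d (Sum.inr p.2)) * qt lam C b d t p
      = qt lam C b d t p * (lam * (d (Sum.inl p.1) + d (Sum.inr p.2))) from mul_comm _ _]
  exact h.exp

lemma hasDerivAt_St (t : ℝ) :
    HasDerivAt (St lam C b d)
      (∑ p, lam * (d (Sum.inl p.1) + d (Sum.inr p.2)) * qt lam C b d t p) t := by
  apply HasDerivAt.fun_sum
  intro p _
  exact hasDerivAt_qt lam C b d t p

lemma hasDerivAt_Tt (t : ℝ) :
    HasDerivAt (Tt lam C b d u)
      (∑ p, lam * (d (Sum.inl p.1) + d (Sum.inr p.2)) * qt lam C b d t p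
        * (u (Sum.inl p.1) + u (Sum.inr p.2))) t := by
  apply HasDerivAt.fun_sum
  intro p _
  exact (hasDerivAt_qt lam C b d t p).mul_const _

lemma continuous_St : Continuous (St lam C b d) :=
  continuous_iff_continuousAt.mpr fun t => (hasDerivAt_St lam C b d t).continuousAt

lemma continuous_Tt : Continuous (Tt lam C b d u) :=
  continuous_iff_continuousAt.mpr fun t => (hasDerivAt_Tt lam C b d u t).continuousAt

lemma continuous_ht : Continuous (ht lam Nr C b d u) := by
  apply Continuous.mul
  · exact continuous_const.mul (Stmt12.continuous_dphi.comp (continuous_St lam C b d))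
  · exact continuous_Tt lam C b d u

lemma rowsum_le (t : ℝ) (i : Fin M) :
    ∑ j, qt lam C b d t (i, j) ≤ St lam C b d t := by
  rw [St, Fintype.sum_prod_type]
  exact Finset.single_le_sum
    (f := fun i => ∑ j, qt lam C b d t (i, j))
    (fun i _ => Finset.sum_nonneg fun j _ => qt_nonneg lam C b d t (i, j))
    (Finset.mem_univ i)

lemma colsum_le (t : ℝ) (j : Fin M) :
    ∑ i, qt lam C b d t (i, j) ≤ St lam C b d t := by
  rw [St, Fintype.sum_prod_type_right]
  exact Finset.single_le_sum
    (f := fun j => ∑ i, qt lam C b d t (i, j))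
    (fun j _ => Finset.sum_nonneg fun i _ => qt_nonneg lam C b d t (i, j))
    (Finset.mem_univ j)

lemma h_eq_g1 {t : ℝ} (hs : St lam C b d t ≤ 1) :
    ht lam Nr C b d u t = Nr * Tt lam C b d u t := by
  rw [ht, Stmt12.dphi_of_le hs, mul_one]

lemma h_eq_g2 {t : ℝ} (hs : 1 ≤ St lam C b d t) :
    ht lam Nr C b d u t = Nr * Tt lam C b d u t / St lam C b d t := by
  rw [ht, Stmt12.dphi_of_ge hs, div_eq_mul_inv]
  ring

lemma boundA (hlam : 0 ≤ lam) (hN : 0 ≤ Nr) (t : ℝ) (hS : St lam C b d t ≤ 1) :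
    |Nr * ∑ p, lam * (d (Sum.inl p.1) + d (Sum.inr p.2)) * qt lam C b d t p
        * (u (Sum.inl p.1) + u (Sum.inr p.2))|
      ≤ 2 * lam * Nr * ‖d‖ * ‖u‖ := by
  set q := qt lam C b d t with hq
  set v : Fin M × Fin M → ℝ := fun p => d (Sum.inl p.1) + d (Sum.inr p.2) with hv
  set w : Fin M × Fin M → ℝ := fun p => u (Sum.inl p.1) + u (Sum.inr p.2) with hw
  have hrw : ∑ p, lam * v p * q p * w p = lam * ∑ p, q p * (v p * w p) := by
    rw [Finset.mul_sum]
    exact Finset.sum_congr rfl fun p _ => by ring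
  rw [hrw, abs_mul, abs_mul, abs_of_nonneg hN, abs_of_nonneg hlam]
  have hqn : ∀ p, 0 ≤ q p := qt_nonneg lam C b d t
  have hcs := cs_abs q v w hqn
  have hdv : ∑ p, q p * v p ^ 2 ≤ 2 * ‖d‖ ^ 2 := by
    rw [norm_sq_split d]
    exact marginal_bound q hqn
      (fun i => le_trans (rowsum_le lam C b d t i) hS)
      (fun j => le_trans (colsum_le lam C b d t j) hS)
      (fun i => d (Sum.inl i)) (fun j => d (Sum.inr j))
  have hdw : ∑ p, q p * w p ^ 2 ≤ 2 * ‖u‖ ^ 2 := by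
    rw [norm_sq_split u]
    exact marginal_bound q hqn
      (fun i => le_trans (rowsum_le lam C b d t i) hS)
      (fun j => le_trans (colsum_le lam C b d t j) hS)
      (fun i => u (Sum.inl i)) (fun j => u (Sum.inr j))
  have hsq := sqrt_bound (norm_nonneg d) (norm_nonneg u) hdv hdw
  have : |∑ p, q p * (v p * w p)| ≤ 2 * ‖d‖ * ‖u‖ := le_trans hcs hsq
  calc Nr * (lam * |∑ p, q p * (v p * w p)|)
      ≤ Nr * (lam * (2 * ‖d‖ * ‖u‖)) := by
        apply mul_le_mul_of_nonneg_left _ hN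
        exact mul_le_mul_of_nonneg_left this hlam
    _ = 2 * lam * Nr * ‖d‖ * ‖u‖ := by ring

lemma boundB (hlam : 0 ≤ lam) (hN : 0 ≤ Nr) (t : ℝ) (hS : 1 ≤ St lam C b d t) :
    |((Nr * ∑ p, lam * (d (Sum.inl p.1) + d (Sum.inr p.2)) * qt lam C b d t p
          * (u (Sum.inl p.1) + u (Sum.inr p.2))) * St lam C b d t
        - Nr * Tt lam C b d u t
          * ∑ p, lam * (d (Sum.inl p.1) + d (Sum.inr p.2)) * qt lam C b d t p)
        / St lam C b d t ^ 2|
      ≤ 2 * lam * Nr * ‖d‖ * ‖u‖ := by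
  have hS0 : (0:ℝ) < St lam C b d t := lt_of_lt_of_le one_pos hS
  set s := St lam C b d t with hsdef
  set q := qt lam C b d t with hq
  set v : Fin M × Fin M → ℝ := fun p => d (Sum.inl p.1) + d (Sum.inr p.2) with hv
  set w : Fin M × Fin M → ℝ := fun p => u (Sum.inl p.1) + u (Sum.inr p.2) with hw
  set q' : Fin M × Fin M → ℝ := fun p => q p / s with hq'
  have e1 : ∑ p, lam * v p * q p * w p = lam * ∑ p, q p * (v p * w p) := by
    rw [Finset.mul_sum]; exact Finset.sum_congr rfl fun p _ => by ring
  have e2 : ∑ p, lam * v p * q p = lam * ∑ p, q p * v p := by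
    rw [Finset.mul_sum]; exact Finset.sum_congr rfl fun p _ => by ring
  have eT : Tt lam C b d u t = ∑ p, q p * w p := rfl
  have e3 : ∑ p, q' p * (v p * w p) = (∑ p, q p * (v p * w p)) / s := by
    rw [Finset.sum_div]
    exact Finset.sum_congr rfl fun p _ => by rw [hq']; ring
  have e4 : ∑ p, q' p * v p = (∑ p, q p * v p) / s := by
    rw [Finset.sum_div]
    exact Finset.sum_congr rfl fun p _ => by rw [hq']; ring
  have e5 : ∑ p, q' p * w p = (∑ p, q p * w p) / s := by
    rw [Finset.sum_div]
    exact Finset.sum_congr rfl fun p _ => by rw [hq']; ring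
  have key : ((Nr * ∑ p, lam * v p * q p * w p) * s
      - Nr * Tt lam C b d u t * ∑ p, lam * v p * q p) / s ^ 2
      = Nr * lam * ((∑ p, q' p * (v p * w p))
        - (∑ p, q' p * v p) * (∑ p, q' p * w p)) := by
    rw [e1, e2, eT, e3, e4, e5]
    field_simp
  rw [key, abs_mul, abs_mul, abs_of_nonneg hN, abs_of_nonneg hlam]
  have hqn' : ∀ p, 0 ≤ q' p := fun p => div_nonneg (qt_nonneg lam C b d t p) hS0.le
  have hsum1 : ∑ p, q' p = 1 := by
    rw [hq']
    rw [← Finset.sum_div]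
    exact div_self (ne_of_gt hS0)
  have hcov := cov_abs q' v w hqn' hsum1
  have hrow' : ∀ i, ∑ j, q' (i, j) ≤ 1 := by
    intro i
    rw [show (∑ j, q' (i, j)) = (∑ j, q (i, j)) / s from by
      rw [Finset.sum_div]]
    rw [div_le_one hS0]
    exact rowsum_le lam C b d t i
  have hcol' : ∀ j, ∑ i, q' (i, j) ≤ 1 := by
    intro j
    rw [show (∑ i, q' (i, j)) = (∑ i, q (i, j)) / s from by
      rw [Finset.sum_div]]
    rw [div_le_one hS0]
    exact colsum_le lam C b d t j
  have hdv : ∑ p, q' p * v p ^ 2 ≤ 2 * ‖d‖ ^ 2 := by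
    rw [norm_sq_split d]
    exact marginal_bound q' hqn' hrow' hcol'
      (fun i => d (Sum.inl i)) (fun j => d (Sum.inr j))
  have hdw : ∑ p, q' p * w p ^ 2 ≤ 2 * ‖u‖ ^ 2 := by
    rw [norm_sq_split u]
    exact marginal_bound q' hqn' hrow' hcol'
      (fun i => u (Sum.inl i)) (fun j => u (Sum.inr j))
  have hsq := sqrt_bound (norm_nonneg d) (norm_nonneg u) hdv hdw
  have hfin : |(∑ p, q' p * (v p * w p)) - (∑ p, q' p * v p) * (∑ p, q' p * w p)|
      ≤ 2 * ‖d‖ * ‖u‖ := le_trans hcov hsq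
  calc Nr * lam * |(∑ p, q' p * (v p * w p))
        - (∑ p, q' p * v p) * (∑ p, q' p * w p)|
      ≤ Nr * lam * (2 * ‖d‖ * ‖u‖) :=
        mul_le_mul_of_nonneg_left hfin (mul_nonneg hN hlam)
    _ = 2 * lam * Nr * ‖d‖ * ‖u‖ := by ring

end Line


section Key

variable (lam Nr : ℝ) (C : Matrix (Fin M) (Fin M) ℝ)
variable (b d u : EuclideanSpace ℝ (Fin M ⊕ Fin M))

lemma exA (hlam : 0 ≤ lam) (hN : 0 ≤ Nr) (t : ℝ) (ht1 : St lam C b d t ≤ 1)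
    (hev : ht lam Nr C b d u =ᶠ[𝓝[Ici t] t] fun s => Nr * Tt lam C b d u s) :
    ∃ y, HasDerivWithinAt (ht lam Nr C b d u) y (Ici t) t
      ∧ |y| ≤ 2 * lam * Nr * ‖d‖ * ‖u‖ := by
  refine ⟨Nr * ∑ p, lam * (d (Sum.inl p.1) + d (Sum.inr p.2)) * qt lam C b d t p
      * (u (Sum.inl p.1) + u (Sum.inr p.2)), ?_, boundA lam Nr C b d u hlam hN t ht1⟩
  have hT := (hasDerivAt_Tt lam C b d u t).const_mul Nr
  exact hT.hasDerivWithinAt.congr_of_eventuallyEq hev (h_eq_g1 lam Nr C b d u ht1)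

lemma exB (hlam : 0 ≤ lam) (hN : 0 ≤ Nr) (t : ℝ) (ht1 : 1 ≤ St lam C b d t)
    (hev : ht lam Nr C b d u =ᶠ[𝓝[Ici t] t] fun s => Nr * Tt lam C b d u s / St lam C b d s) :
    ∃ y, HasDerivWithinAt (ht lam Nr C b d u) y (Ici t) t
      ∧ |y| ≤ 2 * lam * Nr * ‖d‖ * ‖u‖ := by
  refine ⟨_, ?_, boundB lam Nr C b d u hlam hN t ht1⟩
  have hT := (hasDerivAt_Tt lam C b d u t).const_mul Nr
  have hdiv := hT.div (hasDerivAt_St lam C b d t)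
    (ne_of_gt (lt_of_lt_of_le one_pos ht1))
  exact hdiv.hasDerivWithinAt.congr_of_eventuallyEq hev (h_eq_g2 lam Nr C b d u ht1)

lemma key_ex (hlam : 0 < lam) (hN : 0 < Nr) (t : ℝ) :
    ∃ y, HasDerivWithinAt (ht lam Nr C b d u) y (Ici t) t
      ∧ |y| ≤ 2 * lam * Nr * ‖d‖ * ‖u‖ := by
  have hstc : Continuous (St lam C b d) := continuous_St lam C b d
  by_cases hglob : ∀ s : ℝ, St lam C b d s = 1
  · apply exA lam Nr C b d u hlam.le hN.le t (hglob t).le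
    filter_upwards with s
    exact h_eq_g1 lam Nr C b d u (hglob s).le
  · rcases lt_trichotomy (St lam C b d t) 1 with hlt | heq | hgt
    · apply exA lam Nr C b d u hlam.le hN.le t hlt.le
      have hev : ∀ᶠ s in 𝓝 t, St lam C b d s < 1 :=
        hstc.continuousAt.eventually_lt_const hlt
      apply Filter.Eventually.filter_mono nhdsWithin_le_nhds
      filter_upwards [hev] with s hs
      exact h_eq_g1 lam Nr C b d u hs.le
    · -- crossing point : use isolated zeros of the analytic function `St - 1`
      have han : AnalyticOnNhd ℝ (fun s => St lam C b d s - 1) univ := by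
        intro x _
        apply AnalyticAt.sub _ analyticAt_const
        have hsum : AnalyticAt ℝ (fun s : ℝ => ∑ p : Fin M × Fin M, qt lam C b d s p) x := by
          apply Finset.analyticAt_fun_sum
          intro p _
          have haff : AnalyticAt ℝ (fun s : ℝ =>
              (lam * (b (Sum.inl p.1) + b (Sum.inr p.2) - C p.1 p.2) - 1)
                + s * (lam * (d (Sum.inl p.1) + d (Sum.inr p.2)))) x :=
            analyticAt_const.add (analyticAt_id.mul analyticAt_const)
          exact analyticAt_rexp.comp haff
        exact hsum
      have hne : ∀ᶠ s in 𝓝[≠] t, St lam C b d s - 1 ≠ 0 := by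
        rcases (han t (mem_univ t)).eventually_eq_zero_or_eventually_ne_zero with h | h
        · exfalso
          apply hglob
          intro s
          have heq0 := han.eqOn_zero_of_preconnected_of_eventuallyEq_zero
            isPreconnected_univ (mem_univ t) h (mem_univ s)
          have h' : St lam C b d s - 1 = 0 := heq0
          linarith
        · exact h
      obtain ⟨ε, hε, hU⟩ : ∃ ε > 0, ∀ s ∈ Ioo t (t + ε), St lam C b d s ≠ 1 := by
        rw [eventually_nhdsWithin_iff] at hne
        rcases Metric.eventually_nhds_iff.mp hne with ⟨ε, hε, H⟩
        refine ⟨ε, hε, fun s hs hc => ?_⟩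
        have h1 : dist s t < ε := by
          rw [Real.dist_eq, abs_of_pos (sub_pos.mpr hs.1)]
          linarith [hs.2]
        have h2 : s ∈ ({t}ᶜ : Set ℝ) := by
          simp [ne_of_gt hs.1]
        have h3 := H h1 h2
        apply h3
        rw [hc]; ring
      have hsign : (∀ s ∈ Ioo t (t + ε), St lam C b d s < 1)
          ∨ ∀ s ∈ Ioo t (t + ε), 1 < St lam C b d s := by
        by_contra hcon
        push_neg at hcon
        obtain ⟨⟨s₁, hs₁, h₁⟩, ⟨s₂, hs₂, h₂⟩⟩ := hcon
        have h₁' : 1 < St lam C b d s₁ := lt_of_le_of_ne h₁ (Ne.symm (hU s₁ hs₁))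
        have h₂' : St lam C b d s₂ < 1 := lt_of_le_of_ne h₂ (hU s₂ hs₂)
        rcases lt_trichotomy s₁ s₂ with h | h | h
        · obtain ⟨s, hs, hfs⟩ := intermediate_value_Ioo' h.le hstc.continuousOn ⟨h₂', h₁'⟩
          exact hU s ⟨lt_trans hs₁.1 hs.1, lt_trans hs.2 hs₂.2⟩ hfs
        · rw [h] at h₁'; linarith
        · obtain ⟨s, hs, hfs⟩ := intermediate_value_Ioo h.le hstc.continuousOn ⟨h₂', h₁'⟩
          exact hU s ⟨lt_trans hs₂.1 hs.1, lt_trans hs.2 hs₁.2⟩ hfs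
      have hmem : Ico t (t + ε) ∈ 𝓝[Ici t] t := by
        rw [← Ici_inter_Iio]
        exact Filter.inter_mem self_mem_nhdsWithin
          (nhdsWithin_le_nhds (Iio_mem_nhds (by linarith)))
      rcases hsign with hcase | hcase
      · apply exA lam Nr C b d u hlam.le hN.le t heq.le
        filter_upwards [hmem] with s hs
        rcases eq_or_lt_of_le hs.1 with rfl | hlt'
        · exact h_eq_g1 lam Nr C b d u heq.le
        · exact h_eq_g1 lam Nr C b d u (hcase s ⟨hlt', hs.2⟩).le
      · apply exB lam Nr C b d u hlam.le hN.le t heq.ge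
        filter_upwards [hmem] with s hs
        rcases eq_or_lt_of_le hs.1 with rfl | hlt'
        · exact h_eq_g2 lam Nr C b d u heq.ge
        · exact h_eq_g2 lam Nr C b d u (hcase s ⟨hlt', hs.2⟩).le
    · apply exB lam Nr C b d u hlam.le hN.le t hgt.le
      have hev : ∀ᶠ s in 𝓝 t, 1 < St lam C b d s :=
        hstc.continuousAt.eventually_const_lt hgt
      apply Filter.Eventually.filter_mono nhdsWithin_le_nhds
      filter_upwards [hev] with s hs
      exact h_eq_g2 lam Nr C b d u hs.le

lemma lip (hlam : 0 < lam) (hN : 0 < Nr) :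
    |ht lam Nr C b d u 1 - ht lam Nr C b d u 0| ≤ 2 * lam * Nr * ‖d‖ * ‖u‖ := by
  apply mvt_right (continuous_ht lam Nr C b d u).continuousOn
  intro x _
  exact key_ex lam Nr C b d u hlam hN x

end Key

end Stmt12

/-- the gradient of `MK*_{λ,≤N}` is Lipschitz continuous with
constant at most `2λN`. -/
theorem stmt_12 (M : ℕ) (lam Nr : ℝ) (hlam : 0 < lam) (hN : 0 < Nr)
    (C : Matrix (Fin M) (Fin M) ℝ) :
    (∀ β : EuclideanSpace ℝ (Fin M ⊕ Fin M),
      HasGradientAt (MKstarLeN M lam Nr C) (MKstarGrad M lam Nr C β) β) ∧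
    ∀ β β' : EuclideanSpace ℝ (Fin M ⊕ Fin M),
      ‖MKstarGrad M lam Nr C β - MKstarGrad M lam Nr C β'‖ ≤
        2 * lam * Nr * ‖β - β'‖ := by
  constructor
  · exact fun β => Stmt12.hasGradient lam Nr hlam C β
  · intro β β'
    set u : EuclideanSpace ℝ (Fin M ⊕ Fin M) :=
      MKstarGrad M lam Nr C β - MKstarGrad M lam Nr C β' with hu
    by_cases h0 : ‖u‖ = 0
    · rw [h0]
      positivity
    · have hupos : 0 < ‖u‖ := lt_of_le_of_ne (norm_nonneg u) (Ne.symm h0)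
      have hinner : (inner ℝ u u : ℝ)
          = Stmt12.ht lam Nr C β' (β - β') u 1 - Stmt12.ht lam Nr C β' (β - β') u 0 := by
        rw [hu, inner_sub_left]
        rw [Stmt12.inner_grad lam Nr C β u, Stmt12.inner_grad lam Nr C β' u]
        rw [Stmt12.ht, Stmt12.ht, Stmt12.St_one, Stmt12.Tt_one, Stmt12.St_zero, Stmt12.Tt_zero]
      have hK := Stmt12.lip lam Nr C β' (β - β') u hlam hN
      have h1 : ‖u‖ ^ 2 = (inner ℝ u u : ℝ) := (real_inner_self_eq_norm_sq u).symm
      have h2 : ‖u‖ ^ 2 ≤ 2 * lam * Nr * ‖β - β'‖ * ‖u‖ := by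
        rw [h1, hinner]
        calc Stmt12.ht lam Nr C β' (β - β') u 1 - Stmt12.ht lam Nr C β' (β - β') u 0
            ≤ |Stmt12.ht lam Nr C β' (β - β') u 1 - Stmt12.ht lam Nr C β' (β - β') u 0| :=
              le_abs_self _
          _ ≤ 2 * lam * Nr * ‖β - β'‖ * ‖u‖ := hK
      nlinarith [h2, hupos]
end

section
/- Let g* (q) = (N/λ)⟨exp(λ(q − c) − 1), 1⟩ on ℝ^{M²}. Then for τ > 0 the proximity operator of τ·g (where g = (g*)* is the convex conjugate) is given componentwise by prox_{τg}(r)_k = (τ/λ) W((λ/τ) N exp(λ(r_k/τ − c_k) − 1)), where W is the Lambert W function (the unique real solution of w e^w = z for z ≥ 0). -/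
open scoped BigOperators

theorem stmt14_aux (K : ℕ) (lam Nr τ : ℝ) (hlam : 0 < lam) (hN : 0 < Nr)
    (hτ : 0 < τ) (c : Fin K → ℝ)
    (W : ℝ → ℝ)
    (hW : ∀ z : ℝ, 0 ≤ z → 0 ≤ W z ∧ W z * Real.exp (W z) = z)
    (r : EuclideanSpace ℝ (Fin K))
    (Φ : EuclideanSpace ℝ (Fin K) → EReal)
    (hΦ : ∀ y, Φ y = (((1 / 2) * ‖y - r‖ ^ 2 : ℝ) : EReal) + ((τ : ℝ) : EReal) *
      ⨆ q : EuclideanSpace ℝ (Fin K),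
        (((∑ k, y k * q k : ℝ) : EReal) -
          (((Nr / lam) * ∑ k, Real.exp (lam * (q k - c k) - 1) : ℝ) : EReal)))
    (p : EuclideanSpace ℝ (Fin K))
    (hp : ∀ k, p k = (τ / lam) * W ((lam / τ) * Nr * Real.exp (lam * (r k / τ - c k) - 1))) :
    (∀ y, Φ p ≤ Φ y) ∧ (∀ y, Φ y ≤ Φ p → y = p) := by
  set s : EuclideanSpace ℝ (Fin K) := WithLp.toLp 2 fun k => (r k - p k) / τ with hs
  have hsk : ∀ k, s k = (r k - p k) / τ := fun k => rfl
  have hts : ∀ k, τ * s k = r k - p k := fun k => by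
    rw [hsk]; field_simp
  -- first order condition
  have hfoc : ∀ k, Nr * Real.exp (lam * (s k - c k) - 1) = p k := by
    intro k
    set E := Real.exp (lam * (r k / τ - c k) - 1) with hE
    set z := (lam / τ) * Nr * E with hz
    obtain ⟨hw0, hwe⟩ := hW z (by positivity)
    have hpk : p k = (τ / lam) * W z := hp k
    have h1 : lam * (s k - c k) - 1 = (lam * (r k / τ - c k) - 1) - W z := by
      rw [hsk, hpk]; field_simp; ring
    have hez : Real.exp (W z) ≠ 0 := Real.exp_ne_zero _
    rw [h1, Real.exp_sub, hpk, ← hE, mul_div_assoc', div_eq_iff hez, mul_assoc, hwe, hz]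
    field_simp
  -- norms as sums
  have nsq : ∀ x : EuclideanSpace ℝ (Fin K), ‖x‖ ^ 2 = ∑ k, (x k) ^ 2 := fun x => by
    rw [EuclideanSpace.norm_eq, Real.sq_sqrt (by positivity)]
    simp [sq_abs]
  -- real-valued lower bound function
  set C : ℝ := (Nr / lam) * ∑ k, Real.exp (lam * (s k - c k) - 1) with hC
  set Fr : EuclideanSpace ℝ (Fin K) → ℝ :=
    fun y => (1 / 2) * ‖y - r‖ ^ 2 + τ * ((∑ k, y k * s k) - C) with hFrdef
  -- per-coordinate concavity bound
  have hscal : ∀ (k : Fin K) (q : ℝ),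
      p k * q - (Nr / lam) * Real.exp (lam * (q - c k) - 1) ≤
      p k * s k - (Nr / lam) * Real.exp (lam * (s k - c k) - 1) := by
    intro k q
    have hE := Real.add_one_le_exp (lam * (q - s k))
    have hEs : Real.exp (lam * (q - c k) - 1) =
        Real.exp (lam * (s k - c k) - 1) * Real.exp (lam * (q - s k)) := by
      rw [← Real.exp_add]; ring_nf
    have hpos : 0 < Real.exp (lam * (s k - c k) - 1) := Real.exp_pos _
    have hpk := hfoc k
    rw [hEs, ← hpk]
    have h3 : (Nr / lam) * (Real.exp (lam * (s k - c k) - 1) * Real.exp (lam * (q - s k)))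
        ≥ (Nr / lam) * (Real.exp (lam * (s k - c k) - 1) * (lam * (q - s k) + 1)) := by
      apply mul_le_mul_of_nonneg_left _ (by positivity)
      exact mul_le_mul_of_nonneg_left hE hpos.le
    have h4 : (Nr / lam) * (Real.exp (lam * (s k - c k) - 1) * (lam * (q - s k) + 1)) =
        Nr * Real.exp (lam * (s k - c k) - 1) * (q - s k)
          + (Nr / lam) * Real.exp (lam * (s k - c k) - 1) := by
      field_simp
    nlinarith [h3, h4]
  -- the value A attained by the sup at p
  set A : ℝ := (∑ k, p k * s k) - C with hA
  have hkey : ∀ q : EuclideanSpace ℝ (Fin K),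
      (∑ k, p k * q k) - (Nr / lam) * ∑ k, Real.exp (lam * (q k - c k) - 1) ≤ A := by
    intro q
    rw [hA, hC, Finset.mul_sum, Finset.mul_sum, ← Finset.sum_sub_distrib, ← Finset.sum_sub_distrib]
    exact Finset.sum_le_sum fun k _ => hscal k (q k)
  -- g p value
  have hgp : (⨆ q : EuclideanSpace ℝ (Fin K),
      (((∑ k, p k * q k : ℝ) : EReal) -
        (((Nr / lam) * ∑ k, Real.exp (lam * (q k - c k) - 1) : ℝ) : EReal))) = (A : EReal) := by
    apply le_antisymm
    · apply iSup_le
      intro q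
      rw [← EReal.coe_sub]
      exact_mod_cast hkey q
    · apply le_iSup_of_le s
      rw [← EReal.coe_sub, hA, hC]
  -- lower bound on g y
  have hgy : ∀ y : EuclideanSpace ℝ (Fin K),
      (((∑ k, y k * s k) - C : ℝ) : EReal) ≤
      (⨆ q : EuclideanSpace ℝ (Fin K),
        (((∑ k, y k * q k : ℝ) : EReal) -
          (((Nr / lam) * ∑ k, Real.exp (lam * (q k - c k) - 1) : ℝ) : EReal))) := by
    intro y
    apply le_iSup_of_le s
    rw [← EReal.coe_sub, hC]
  have hFry : ∀ y, Fr y = (1 / 2) * ‖y - r‖ ^ 2 + τ * ((∑ k, y k * s k) - C) :=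
    fun y => rfl
  -- Φ p = Fr p
  have hΦp : Φ p = ((Fr p : ℝ) : EReal) := by
    have h8 : Fr p = (1 / 2) * ‖p - r‖ ^ 2 + τ * A := by rw [hFry, hA]
    rw [hΦ, hgp, h8]; norm_cast
  -- Φ y ≥ Fr y
  have hΦy : ∀ y, ((Fr y : ℝ) : EReal) ≤ Φ y := by
    intro y
    rw [hΦ]
    refine le_trans (le_of_eq ?_) (add_le_add_right
      (mul_le_mul_of_nonneg_left (hgy y) (EReal.coe_nonneg.mpr hτ.le)) _)
    rw [hFry]; norm_cast
  -- quadratic identity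
  have hFr : ∀ y, Fr y = Fr p + (1 / 2) * ‖y - p‖ ^ 2 := by
    intro y
    rw [hFry y, hFry p]
    rw [nsq (y - r), nsq (p - r), nsq (y - p)]
    have hsub : ∀ (a b : EuclideanSpace ℝ (Fin K)) (k : Fin K), (a - b) k = a k - b k :=
      fun a b k => rfl
    simp only [hsub]
    have expand : ∀ w : EuclideanSpace ℝ (Fin K),
        (1 / 2) * (∑ k, (w k - r k) ^ 2) + τ * ((∑ k, w k * s k) - C) =
        (∑ k, ((1 / 2) * (w k - r k) ^ 2 + w k * (r k - p k))) - τ * C := by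
      intro w
      rw [Finset.sum_add_distrib, Finset.mul_sum, mul_sub, Finset.mul_sum]
      have : ∀ k ∈ Finset.univ, τ * (w k * s k) = w k * (r k - p k) := fun k _ => by
        rw [← hts k]; ring
      rw [Finset.sum_congr rfl this]
      ring
    rw [expand y, expand p]
    have percoord : ∀ k ∈ Finset.univ,
        (1 / 2) * (y k - r k) ^ 2 + y k * (r k - p k) =
        ((1 / 2) * (p k - r k) ^ 2 + p k * (r k - p k)) + (1 / 2) * (y k - p k) ^ 2 := by
      intro k _; ring
    rw [Finset.sum_congr rfl percoord, Finset.sum_add_distrib, ← Finset.mul_sum]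
    ring
  constructor
  · intro y
    rw [hΦp]
    refine le_trans ?_ (hΦy y)
    rw [EReal.coe_le_coe_iff, hFr y]
    nlinarith [sq_nonneg ‖y - p‖]
  · intro y hy
    rw [hΦp] at hy
    have h5 : ((Fr y : ℝ) : EReal) ≤ ((Fr p : ℝ) : EReal) := le_trans (hΦy y) hy
    rw [EReal.coe_le_coe_iff, hFr y] at h5
    have h6 : ‖y - p‖ ^ 2 ≤ 0 := by nlinarith
    have h7 : ‖y - p‖ = 0 := by nlinarith [sq_nonneg ‖y - p‖, norm_nonneg (y - p)]
    rw [norm_eq_zero, sub_eq_zero] at h7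
    exact h7

/-- let `g*(q) = (N/λ)⟨exp(λ(q−c)−1), 1⟩` and let `g = (g*)*` be
its convex conjugate. Then for `τ > 0`, the proximity operator of `τ·g` at `r`
is the point with components `(τ/λ) W((λ/τ) N exp(λ(r_k/τ − c_k) − 1))`,
where `W` is the Lambert W function (unique real solution of `w e^w = z`,
`z ≥ 0`); i.e. this point is the unique minimizer of
`y ↦ ½‖y−r‖² + τ g(y)`. -/
theorem stmt_14 (K : ℕ) (lam Nr τ : ℝ) (hlam : 0 < lam) (hN : 0 < Nr)
    (hτ : 0 < τ) (c : Fin K → ℝ)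
    (W : ℝ → ℝ)
    (hW : ∀ z : ℝ, 0 ≤ z → 0 ≤ W z ∧ W z * Real.exp (W z) = z)
    (r : EuclideanSpace ℝ (Fin K)) :
    letI gstar : EuclideanSpace ℝ (Fin K) → ℝ := fun q =>
      (Nr / lam) * ∑ k, Real.exp (lam * (q k - c k) - 1)
    letI g : EuclideanSpace ℝ (Fin K) → EReal := fun y =>
      ⨆ q : EuclideanSpace ℝ (Fin K),
        (((∑ k, y k * q k : ℝ) : EReal) - ((gstar q : ℝ) : EReal))
    letI Φ : EuclideanSpace ℝ (Fin K) → EReal := fun y =>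
      (((1 / 2) * ‖y - r‖ ^ 2 : ℝ) : EReal) + ((τ : ℝ) : EReal) * g y
    letI p : EuclideanSpace ℝ (Fin K) := WithLp.toLp 2 fun k =>
      (τ / lam) * W ((lam / τ) * Nr * Real.exp (lam * (r k / τ - c k) - 1))
    (∀ y, Φ p ≤ Φ y) ∧ (∀ y, Φ y ≤ Φ p → y = p) := by
  exact stmt14_aux K lam Nr τ hlam hN hτ c W hW r _ (fun y => rfl) _ (fun k => rfl)
end

section
/- For τ > 0 and the function g*(q) = (N/λ) Σ_k exp(λ(q_k − c_k) − 1), the proximity operator is prox_{τg*}(p)_k = p_k − (1/λ) W(λτN exp(λ(p_k − c_k) − 1)), where W is the Lambert W function. -/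
open scoped BigOperators

/-- Per-coordinate key inequality: with `xs = p - w/lam` where
`w * exp w = lam * a * exp (lam*(p-c)-1)`, the 1-d objective at `x` dominates
its value at `xs` plus a quadratic gap. -/
lemma stmt_15_key (lam a : ℝ) (hlam : 0 < lam) (ha : 0 < a) (p c w x : ℝ)
    (hwe : w * Real.exp w = lam * a * Real.exp (lam * (p - c) - 1)) :
    (1/2) * (p - (1/lam) * w - p)^2 + (a/lam) * Real.exp (lam * (p - (1/lam) * w - c) - 1)
      + (1/2) * (x - (p - (1/lam) * w))^2
      ≤ (1/2) * (x - p)^2 + (a/lam) * Real.exp (lam * (x - c) - 1) := by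
  set xs : ℝ := p - (1/lam) * w with hxs
  have hlam' : lam ≠ 0 := ne_of_gt hlam
  have hEs : Real.exp (lam * (xs - c) - 1)
      = Real.exp (lam * (p - c) - 1) * Real.exp (-w) := by
    rw [← Real.exp_add]
    congr 1
    have hl : lam * (1/lam) = 1 := by field_simp
    rw [hxs]; linear_combination (-w) * hl
  have hkey : lam * a * Real.exp (lam * (xs - c) - 1) = w := by
    rw [hEs, ← mul_assoc, ← hwe, mul_assoc, ← Real.exp_add]
    simp
  have hfac : Real.exp (lam * (x - c) - 1)
      = Real.exp (lam * (xs - c) - 1) * Real.exp (lam * (x - xs)) := by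
    rw [← Real.exp_add]; ring_nf
  have hexp : lam * (x - xs) + 1 ≤ Real.exp (lam * (x - xs)) :=
    Real.add_one_le_exp _
  have hEpos : 0 < Real.exp (lam * (xs - c) - 1) := Real.exp_pos _
  have hge : Real.exp (lam * (xs - c) - 1) * (lam * (x - xs) + 1)
      ≤ Real.exp (lam * (x - c) - 1) := by
    rw [hfac]
    exact mul_le_mul_of_nonneg_left hexp hEpos.le
  have h1 : (a/lam) * (Real.exp (lam * (xs - c) - 1) * (lam * (x - xs) + 1))
      ≤ (a/lam) * Real.exp (lam * (x - c) - 1) :=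
    mul_le_mul_of_nonneg_left hge (by positivity)
  have expand : (a/lam) * (Real.exp (lam * (xs - c) - 1) * (lam * (x - xs) + 1))
      = (a/lam) * Real.exp (lam * (xs - c) - 1) + (w/lam) * (x - xs) := by
    rw [← hkey]
    field_simp
    ring
  have hw : w = lam * (p - xs) := by
    rw [hxs]; field_simp
    ring
  have hquad : (1/2) * (xs - p)^2 + (1/2) * (x - xs)^2
      = (1/2) * (x - p)^2 + (w/lam) * (x - xs) := by
    rw [hw]
    field_simp
    ring
  linarith [h1, expand, hquad]

/-- for `τ > 0` and `g*(q) = (N/λ) Σ_k exp(λ(q_k − c_k) − 1)`,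
the proximity operator of `τ g*` at `p` has components
`p_k − (1/λ) W(λτN exp(λ(p_k − c_k) − 1))`, with `W` the Lambert W function;
i.e. this point is the unique minimizer of `q ↦ ½‖q−p‖² + τ g*(q)`. -/
theorem stmt_15 (K : ℕ) (lam Nr τ : ℝ) (hlam : 0 < lam) (hN : 0 < Nr)
    (hτ : 0 < τ) (c : Fin K → ℝ)
    (W : ℝ → ℝ)
    (hW : ∀ z : ℝ, 0 ≤ z → 0 ≤ W z ∧ W z * Real.exp (W z) = z)
    (p : EuclideanSpace ℝ (Fin K)) :
    letI gstar : EuclideanSpace ℝ (Fin K) → ℝ := fun q =>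
      (Nr / lam) * ∑ k, Real.exp (lam * (q k - c k) - 1)
    letI Φ : EuclideanSpace ℝ (Fin K) → ℝ := fun q =>
      (1 / 2) * ‖q - p‖ ^ 2 + τ * gstar q
    letI qstar : EuclideanSpace ℝ (Fin K) := WithLp.toLp 2 fun k =>
      p k - (1 / lam) * W (lam * τ * Nr * Real.exp (lam * (p k - c k) - 1))
    (∀ q, Φ qstar ≤ Φ q) ∧ (∀ q, Φ q ≤ Φ qstar → q = qstar) := by
  beta_reduce
  set qs : EuclideanSpace ℝ (Fin K) := WithLp.toLp 2 fun k =>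
      p k - 1 / lam * W (lam * τ * Nr * Real.exp (lam * (p k - c k) - 1)) with hqs
  have hnorm : ∀ x : EuclideanSpace ℝ (Fin K), ‖x‖^2 = ∑ k, (x k)^2 := by
    intro x
    rw [EuclideanSpace.norm_eq x, Real.sq_sqrt (by positivity)]
    simp [sq_abs]
  have hΦ : ∀ q : EuclideanSpace ℝ (Fin K),
      1 / 2 * ‖q - p‖ ^ 2 + τ * (Nr / lam * ∑ k, Real.exp (lam * (q k - c k) - 1))
        = ∑ k, ((1/2) * (q k - p k)^2
          + ((τ * Nr)/lam) * Real.exp (lam * (q k - c k) - 1)) := by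
    intro q
    rw [hnorm (q - p), Finset.mul_sum, Finset.mul_sum, Finset.mul_sum,
      ← Finset.sum_add_distrib]
    apply Finset.sum_congr rfl
    intro k _
    have : (q - p) k = q k - p k := by simp
    rw [this]
    ring
  have main : ∀ q : EuclideanSpace ℝ (Fin K),
      (∑ k, ((1/2) * (qs k - p k)^2
          + ((τ * Nr)/lam) * Real.exp (lam * (qs k - c k) - 1)))
        + ∑ k, (1/2) * (q k - qs k)^2
      ≤ ∑ k, ((1/2) * (q k - p k)^2
          + ((τ * Nr)/lam) * Real.exp (lam * (q k - c k) - 1)) := by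
    intro q
    rw [← Finset.sum_add_distrib]
    apply Finset.sum_le_sum
    intro k _
    have hz : 0 ≤ lam * τ * Nr * Real.exp (lam * (p k - c k) - 1) := by positivity
    obtain ⟨hw0, hwe⟩ := hW _ hz
    have hkey := stmt_15_key lam (τ * Nr) hlam (by positivity) (p k) (c k)
      (W (lam * τ * Nr * Real.exp (lam * (p k - c k) - 1))) (q k)
      (by rw [hwe]; ring)
    have hq : qs k = p k - (1/lam) * W (lam * τ * Nr * Real.exp (lam * (p k - c k) - 1)) := by
      norm_num [hqs]
    rw [hq]
    linarith [hkey]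
  constructor
  · intro q
    rw [hΦ q, hΦ qs]
    have hpos : 0 ≤ ∑ k, (1/2) * (q k - qs k)^2 :=
      Finset.sum_nonneg fun k _ => by positivity
    linarith [main q]
  · intro q hq
    rw [hΦ q, hΦ qs] at hq
    have hsum : ∑ k, (1/2) * (q k - qs k)^2 ≤ 0 := by linarith [main q]
    have hzero : ∀ k ∈ Finset.univ, (1/2) * (q k - qs k)^2 = 0 := by
      apply (Finset.sum_eq_zero_iff_of_nonneg (fun k _ => by positivity)).1
      exact le_antisymm hsum (Finset.sum_nonneg fun k _ => by positivity)
    ext k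
    have h2 := hzero k (Finset.mem_univ k)
    have h3 : (q k - qs k)^2 = 0 := by
      rcases mul_eq_zero.1 h2 with h | h
      · norm_num at h
      · exact h
    have h4 : q k - qs k = 0 := by
      have := sq_nonneg (q k - qs k)
      nlinarith [h3]
    have h5 : q k = qs k := by linarith
    exact h5
end
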